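/- Every type is strongly isomorphic to its normal form: σ ≈ₛ nf(σ), where nf(σ) is the (unique up to commutativity/associativity) normal form of σ with respect to the top normalisation rules. -/

import Mathlib

namespace TypeIso

open Relation

/-- Untyped λ-terms with named variables. -/
inductive Term : Type
  | var : ℕ → Term
  | app : Term → Term → Term
  | lam : ℕ → Term → Term
deriving DecidableEq

namespace Term

/-- Free variables. -/
def fv : Term → Finset ℕ
  | var x => {x}
  | app M N => fv M ∪ fv N
  | lam x M => fv M \ {x}

/-- Substitution `M[N/x]` (naive; adequate for the linear terms considered). -/
def subst : Term → ℕ → Term → Term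
  | var y, x, N => if y = x then N else var y
  | app M₁ M₂, x, N => app (subst M₁ x N) (subst M₂ x N)
  | lam y M, x, N => if y = x then lam y M else lam y (subst M x N)

end Term

open Term

/-- One-step β-reduction. -/
inductive Beta : Term → Term → Prop
  | beta (x M N) : Beta (Term.app (Term.lam x M) N) (Term.subst M x N)
  | appL {M M'} (N) : Beta M M' → Beta (Term.app M N) (Term.app M' N)
  | appR (M) {N N'} : Beta N N' → Beta (Term.app M N) (Term.app M N')
  | lam (x) {M M'} : Beta M M' → Beta (Term.lam x M) (Term.lam x M')

/-- One-step η-reduction. -/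
inductive Eta : Term → Term → Prop
  | eta (x M) : x ∉ fv M → Eta (Term.lam x (Term.app M (Term.var x))) M
  | appL {M M'} (N) : Eta M M' → Eta (Term.app M N) (Term.app M' N)
  | appR (M) {N N'} : Eta N N' → Eta (Term.app M N) (Term.app M N')
  | lam (x) {M M'} : Eta M M' → Eta (Term.lam x M) (Term.lam x M')

def BetaStar : Term → Term → Prop := ReflTransGen Beta
def EtaStar : Term → Term → Prop := ReflTransGen Eta
/-- η-expansion: the converse of one-step η-reduction. -/
def EtaExp : Term → Term → Prop := fun a b => Eta b a
def EtaExpStar : Term → Term → Prop := ReflTransGen EtaExp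
def BetaConv : Term → Term → Prop := EqvGen Beta
def BetaEta : Term → Term → Prop := fun a b => Beta a b ∨ Eta a b
def BetaEtaConv : Term → Term → Prop := EqvGen BetaEta

def BetaEtaRed : Term → Term → Prop := ReflTransGen BetaEta

/-- `appList h [a₁,…,aₙ] = h a₁ … aₙ`. -/
def appList (h : Term) (args : List Term) : Term := args.foldl Term.app h
/-- `lamList [y₁,…,yₙ] M = λ y₁ … yₙ. M`. -/
def lamList (xs : List ℕ) (body : Term) : Term := xs.foldr Term.lam body

/-- β-normal finite hereditary permutators:
`λ x y₁ … yₙ. x (P₁ y_{π(1)}) … (Pₙ y_{π(n)})` with each `Pᵢ` an FHP. -/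
inductive FHPnf : Term → Prop
  | mk (x : ℕ) (ys : List ℕ) (Ps : List Term) (π : Equiv.Perm (Fin ys.length))
      (hlen : Ps.length = ys.length)
      (hx : x ∉ ys) (hnd : ys.Nodup)
      (hPs : ∀ P ∈ Ps, FHPnf P) :
      FHPnf (Term.lam x (lamList ys (appList (Term.var x)
        (List.ofFn fun i : Fin ys.length =>
          Term.app (Ps.get (Fin.cast hlen.symm i)) (Term.var (ys.get (π i)))))))

/-- Finite hereditary permutators (modulo β-conversion). -/
def FHP (M : Term) : Prop := ∃ N, BetaConv M N ∧ FHPnf N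

/-- β-normal finite hereditary identities:
`λ x y₁ … yₙ. x (Id₁ y₁) … (Idₙ yₙ)` with each `Idᵢ` an FHI. -/
inductive FHInf : Term → Prop
  | mk (x : ℕ) (ys : List ℕ) (Ids : List Term)
      (hlen : Ids.length = ys.length)
      (hx : x ∉ ys) (hnd : ys.Nodup)
      (hIds : ∀ P ∈ Ids, FHInf P) :
      FHInf (Term.lam x (lamList ys (appList (Term.var x)
        (List.ofFn fun i : Fin ys.length =>
          Term.app (Ids.get (Fin.cast hlen.symm i)) (Term.var (ys.get i))))))

/-- Finite hereditary identities (modulo β-conversion). -/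
def FHI (M : Term) : Prop := ∃ N, BetaConv M N ∧ FHInf N

/-- Types with atoms, ω, arrow, intersection and union. -/
inductive Ty : Type
  | atom : ℕ → Ty
  | omega : Ty
  | arr : Ty → Ty → Ty
  | and : Ty → Ty → Ty
  | or : Ty → Ty → Ty
deriving DecidableEq

/-- Semantic type equivalence `≅`: the least congruence with
`φ ≅ ω→φ`, `ω ≅ ω→ω`, `σ ≅ σ∧ω ≅ ω∧σ`, `ω ≅ σ∨ω ≅ ω∨σ`. -/
inductive SemEq : Ty → Ty → Prop
  | refl (σ) : SemEq σ σ
  | symm : SemEq σ τ → SemEq τ σ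
  | trans : SemEq σ τ → SemEq τ ρ → SemEq σ ρ
  | arr : SemEq σ σ' → SemEq τ τ' → SemEq (Ty.arr σ τ) (Ty.arr σ' τ')
  | and : SemEq σ σ' → SemEq τ τ' → SemEq (Ty.and σ τ) (Ty.and σ' τ')
  | or : SemEq σ σ' → SemEq τ τ' → SemEq (Ty.or σ τ) (Ty.or σ' τ')
  | atomFun (a) : SemEq (Ty.atom a) (Ty.arr Ty.omega (Ty.atom a))
  | omegaFun : SemEq Ty.omega (Ty.arr Ty.omega Ty.omega)
  | andOmegaR (σ) : SemEq σ (Ty.and σ Ty.omega)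
  | andOmegaL (σ) : SemEq σ (Ty.and Ty.omega σ)
  | orOmegaR (σ) : SemEq Ty.omega (Ty.or σ Ty.omega)
  | orOmegaL (σ) : SemEq Ty.omega (Ty.or Ty.omega σ)

/-- Relevant environments, considered up to permutation in the rules. -/
abbrev Env := List (ℕ × Ty)

def Env.dom (Γ : Env) : List ℕ := Γ.map Prod.fst

def EnvDisj (Γ₁ Γ₂ : Env) : Prop := ∀ x, x ∈ Γ₁.dom → x ∉ Γ₂.dom

/-- The intersection-union type assignment system for linear λ-terms (Figure 1). -/
inductive Deriv : Env → Term → Ty → Prop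
  | ax (x σ) : Deriv [(x, σ)] (Term.var x) σ
  | eqv {Γ M σ τ} : Deriv Γ M σ → SemEq σ τ → Deriv Γ M τ
  | perm {Γ Γ' M σ} : Deriv Γ M σ → Γ.Perm Γ' → Deriv Γ' M σ
  | arrI {Γ x σ M τ} : Deriv ((x, σ) :: Γ) M τ → Deriv Γ (Term.lam x M) (Ty.arr σ τ)
  | arrE {Γ₁ Γ₂ M N σ τ} : Deriv Γ₁ M (Ty.arr σ τ) → Deriv Γ₂ N σ → EnvDisj Γ₁ Γ₂ →
      Deriv (Γ₁ ++ Γ₂) (Term.app M N) τ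
  | andI {Γ M σ τ} : Deriv Γ M σ → Deriv Γ M τ → Deriv Γ M (Ty.and σ τ)
  | andE₁ {Γ M σ τ} : Deriv Γ M (Ty.and σ τ) → Deriv Γ M σ
  | andE₂ {Γ M σ τ} : Deriv Γ M (Ty.and σ τ) → Deriv Γ M τ
  | orI₁ {Γ M σ τ} : Deriv Γ M σ → Deriv Γ M (Ty.or σ τ)
  | orI₂ {Γ M σ τ} : Deriv Γ M σ → Deriv Γ M (Ty.or τ σ)
  | orE {Γ₁ Γ₂ x M N σ τ ζ ρ} :
      Deriv ((x, Ty.and σ ζ) :: Γ₁) M ρ →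
      Deriv ((x, Ty.and τ ζ) :: Γ₁) M ρ →
      Deriv Γ₂ N (Ty.and (Ty.or σ τ) ζ) → EnvDisj Γ₁ Γ₂ →
      Deriv (Γ₁ ++ Γ₂) (Term.subst M x N) ρ

/-- Linear λ-terms: every free or bound variable occurs exactly once. -/
inductive Linear : Term → Prop
  | var (x) : Linear (Term.var x)
  | app {M N} : Linear M → Linear N → Disjoint (fv M) (fv N) → Linear (Term.app M N)
  | lam {x M} : Linear M → x ∈ fv M → Linear (Term.lam x M)

/-- A variable fresh for a finite set. -/
def freshVar (s : Finset ℕ) : ℕ := (s.sup id) + 1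

/-- Composition `λx. P (Q x)` with a fresh `x`. -/
def tcomp (P Q : Term) : Term :=
  Term.lam (freshVar (fv P ∪ fv Q))
    (Term.app P (Term.app Q (Term.var (freshVar (fv P ∪ fv Q)))))

/-- `P` and `Q` are inverse of each other: both compositions are βη-equal to the identity. -/
def InvPair (P Q : Term) : Prop :=
  ∃ x, BetaEtaConv (tcomp P Q) (Term.lam x (Term.var x)) ∧
       BetaEtaConv (tcomp Q P) (Term.lam x (Term.var x))

/-- Type isomorphism `σ ≈ τ`. -/
def TyIso (σ τ : Ty) : Prop :=
  ∃ P Q, FHP P ∧ FHP Q ∧ InvPair P Q ∧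
    Deriv [] P (Ty.arr σ τ) ∧ Deriv [] Q (Ty.arr τ σ)

/-- Strong type isomorphism `σ ≈ₛ τ`: proved by a finite hereditary identity. -/
def StrongIso (σ τ : Ty) : Prop :=
  ∃ Id, FHI Id ∧ Deriv [] Id (Ty.arr σ τ) ∧ Deriv [] Id (Ty.arr τ σ)

/-- The normalisation pre-order `≤` on types. -/
inductive NormLe : Ty → Ty → Prop
  | refl (σ) : NormLe σ σ
  | trans {σ τ ρ} : NormLe σ τ → NormLe τ ρ → NormLe σ ρ
  | leOmega (σ) : NormLe σ Ty.omega
  | andE₁ (σ τ) : NormLe (Ty.and σ τ) σ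
  | andE₂ (σ τ) : NormLe (Ty.and σ τ) τ
  | orI₁ (σ τ) : NormLe σ (Ty.or σ τ)
  | orI₂ (σ τ) : NormLe τ (Ty.or σ τ)
  | andI {σ τ ρ} : NormLe σ τ → NormLe σ ρ → NormLe σ (Ty.and τ ρ)
  | orE {σ τ ρ} : NormLe σ τ → NormLe ρ τ → NormLe (Ty.or σ ρ) τ
  | atomArr (a σ) : NormLe (Ty.atom a) (Ty.arr σ (Ty.atom a))
  | omegaArr (σ) : NormLe Ty.omega (Ty.arr σ Ty.omega)
  | arr {σ σ' τ τ'} : NormLe σ' σ → NormLe τ τ' → NormLe (Ty.arr σ τ) (Ty.arr σ' τ')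

/-- Inner type normalisation rules `σ ⇝ τ`. -/
inductive InnerStep : Ty → Ty → Prop
  | atomRule (a) : InnerStep (Ty.arr Ty.omega (Ty.atom a)) (Ty.atom a)
  | omegaRule {σ} : NormLe Ty.omega σ → σ ≠ Ty.omega → InnerStep σ Ty.omega
  | distArrAnd (σ τ ρ) :
      InnerStep (Ty.arr σ (Ty.and τ ρ)) (Ty.and (Ty.arr σ τ) (Ty.arr σ ρ))
  | distAndArr (σ τ ρ ζ) :
      InnerStep (Ty.arr (Ty.and (Ty.or σ τ) ρ) ζ)
                (Ty.arr (Ty.or (Ty.and σ ρ) (Ty.and τ ρ)) ζ)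
  | distOrArr (σ τ ρ) :
      InnerStep (Ty.arr (Ty.or σ τ) ρ) (Ty.and (Ty.arr σ ρ) (Ty.arr τ ρ))
  | distArrOr (σ τ ρ ζ) :
      InnerStep (Ty.arr σ (Ty.or (Ty.and τ ρ) ζ))
                (Ty.arr σ (Ty.and (Ty.or τ ζ) (Ty.or ρ ζ)))
  | eraseAnd {σ τ} : NormLe σ τ → InnerStep (Ty.and σ τ) σ
  | eraseOr {σ τ} : NormLe σ τ → InnerStep (Ty.or σ τ) τ

/-- Type contexts. -/
inductive TyCtx : Type
  | hole : TyCtx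
  | arrL : TyCtx → Ty → TyCtx
  | arrR : Ty → TyCtx → TyCtx
  | andL : TyCtx → Ty → TyCtx
  | andR : Ty → TyCtx → TyCtx
  | orL : TyCtx → Ty → TyCtx
  | orR : Ty → TyCtx → TyCtx

/-- Filling the hole of a type context. -/
def TyCtx.fill : TyCtx → Ty → Ty
  | TyCtx.hole, τ => τ
  | TyCtx.arrL C σ, τ => Ty.arr (C.fill τ) σ
  | TyCtx.arrR σ C, τ => Ty.arr σ (C.fill τ)
  | TyCtx.andL C σ, τ => Ty.and (C.fill τ) σ
  | TyCtx.andR σ C, τ => Ty.and σ (C.fill τ)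
  | TyCtx.orL C σ, τ => Ty.or (C.fill τ) σ
  | TyCtx.orR σ C, τ => Ty.or σ (C.fill τ)

/-- Top normalisation rules `σ ⟹ τ`: contextual closure of the inner rules,
plus `(σ∧τ)∨ρ ⟹ (σ∨ρ)∧(τ∨ρ)` at the top or in right-hand sides of arrows. -/
inductive TopStep : Ty → Ty → Prop
  | ctx {σ τ} (C : TyCtx) : InnerStep σ τ → TopStep (C.fill σ) (C.fill τ)
  | dist (σ τ ρ) :
      TopStep (Ty.or (Ty.and σ τ) ρ) (Ty.and (Ty.or σ ρ) (Ty.or τ ρ))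
  | arrR {τ τ'} (σ) : TopStep τ τ' → TopStep (Ty.arr σ τ) (Ty.arr σ τ')

open Classical in
/-- The normal form of a type w.r.t. the top normalisation rules. -/
noncomputable def nf (σ : Ty) : Ty :=
  if h : ∃ ν, Relation.ReflTransGen TopStep σ ν ∧ ∀ ρ, ¬ TopStep ν ρ then h.choose else σ

/-- `mkArrow [ξ₁,…,ξₙ] μ = ξ₁ → … → ξₙ → μ`. -/
def mkArrow (args : List Ty) (res : Ty) : Ty := args.foldr Ty.arr res

/-- Similarity between sequences of normal types. -/
inductive TySim : List Ty → List Ty → Prop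
  | refl (l) : TySim l l
  | symm {l r} : TySim l r → TySim r l
  | trans {l r s} : TySim l r → TySim r s → TySim l s
  | mergeAnd (l₁ l₂ r₁ r₂ : List Ty) (η₁ η₂ θ₁ θ₂ : Ty) :
      l₁.length = r₁.length →
      TySim (l₁ ++ η₁ :: η₂ :: l₂) (r₁ ++ θ₁ :: θ₂ :: r₂) →
      TySim (l₁ ++ nf (Ty.and η₁ η₂) :: l₂) (r₁ ++ nf (Ty.and θ₁ θ₂) :: r₂)
  | mergeOr (l₁ l₂ r₁ r₂ : List Ty) (η₁ η₂ θ₁ θ₂ : Ty) :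
      l₁.length = r₁.length →
      TySim (l₁ ++ η₁ :: η₂ :: l₂) (r₁ ++ θ₁ :: θ₂ :: r₂) →
      TySim (l₁ ++ nf (Ty.or η₁ η₂) :: l₂) (r₁ ++ nf (Ty.or θ₁ θ₂) :: r₂)
  | arrow (m n : ℕ) (ξ χ : Fin n → Fin m → Ty) (μ ν : Fin m → Ty)
      (π : Equiv.Perm (Fin n)) :
      (∀ i, TySim (List.ofFn (ξ i)) (List.ofFn (χ i))) →
      TySim (List.ofFn μ) (List.ofFn ν) →
      TySim (List.ofFn fun j => nf (mkArrow (List.ofFn fun i => ξ i j) (μ j)))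
            (List.ofFn fun j => nf (mkArrow (List.ofFn fun i => χ (π i) j) (ν j)))


/-! ### Infrastructure -/

namespace Term

/-- Size of a term. -/
def size : Term → ℕ
  | var _ => 1
  | app M N => size M + size N + 1
  | lam _ M => size M + 1

/-- All variables (free and bound). -/
def vset : Term → Finset ℕ
  | var x => {x}
  | app M N => vset M ∪ vset N
  | lam x M => insert x (vset M)

lemma fv_subset_vset : ∀ M : Term, fv M ⊆ vset M
  | var x => by simp [fv, vset]
  | app M N => by
      simp only [fv, vset]
      exact Finset.union_subset_union (fv_subset_vset M) (fv_subset_vset N)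
  | lam x M => by
      simp only [fv, vset]
      exact (Finset.sdiff_subset).trans ((fv_subset_vset M).trans (Finset.subset_insert _ _))

lemma subst_eq_self {M : Term} {x : ℕ} (N : Term) (h : x ∉ fv M) : M.subst x N = M := by
  induction M with
  | var y =>
      simp [fv] at h
      simp [subst, Ne.symm h]
  | app M₁ M₂ ih₁ ih₂ =>
      simp [fv] at h
      simp [subst, ih₁ h.1, ih₂ h.2]
  | lam y M ih =>
      by_cases hxy : y = x
      · simp [subst, hxy]
      · simp [fv, Finset.mem_sdiff] at h
        have : x ∉ fv M := fun hx => by simp [hx, Ne.symm hxy] at h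
        simp [subst, hxy, ih this]

lemma subst_var_self : ∀ (M : Term) (x : ℕ), M.subst x (var x) = M
  | var y, x => by by_cases h : y = x <;> simp [subst, h]
  | app M N, x => by simp [subst, subst_var_self M x, subst_var_self N x]
  | lam y M, x => by by_cases h : y = x <;> simp [subst, h, subst_var_self M x]

end Term

open Term

@[simp] lemma lamList_nil (M : Term) : lamList [] M = M := rfl
@[simp] lemma lamList_cons (y : ℕ) (ys : List ℕ) (M : Term) :
    lamList (y :: ys) M = Term.lam y (lamList ys M) := rfl
lemma lamList_append (ys zs : List ℕ) (M : Term) :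
    lamList (ys ++ zs) M = lamList ys (lamList zs M) := by
  simp [lamList, List.foldr_append]

@[simp] lemma appList_nil (H : Term) : appList H [] = H := rfl
@[simp] lemma appList_cons (H a : Term) (as : List Term) :
    appList H (a :: as) = appList (Term.app H a) as := rfl
lemma appList_append (H : Term) (as bs : List Term) :
    appList H (as ++ bs) = appList (appList H as) bs := by
  simp [appList, List.foldl_append]

/-- The list of arguments `[P₁ y₁, …, Pₙ yₙ]`. -/
def zarg (Ps : List Term) (ys : List ℕ) : List Term :=
  List.zipWith (fun P y => Term.app P (Term.var y)) Ps ys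

@[simp] lemma zarg_nil_left (ys : List ℕ) : zarg [] ys = [] := rfl
@[simp] lemma zarg_nil_right (Ps : List Term) : zarg Ps [] = by exact [] := by
  simp [zarg]
@[simp] lemma zarg_cons (P : Term) (Ps : List Term) (y : ℕ) (ys : List ℕ) :
    zarg (P :: Ps) (y :: ys) = Term.app P (Term.var y) :: zarg Ps ys := rfl

lemma zarg_length (Ps : List Term) (ys : List ℕ) :
    (zarg Ps ys).length = min Ps.length ys.length := by simp [zarg]

lemma zarg_append {Ps Qs : List Term} {ys zs : List ℕ} (h : Ps.length = ys.length) :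
    zarg (Ps ++ Qs) (ys ++ zs) = zarg Ps ys ++ zarg Qs zs := by
  simp [zarg, List.zipWith_append h]

lemma ofFn_eq_zarg (ys : List ℕ) (Ps : List Term) (hlen : Ps.length = ys.length) :
    (List.ofFn fun i : Fin ys.length =>
      Term.app (Ps.get (Fin.cast hlen.symm i)) (Term.var (ys.get i))) = zarg Ps ys := by
  apply List.ext_getElem
  · simp [zarg, hlen]
  · intro i h₁ h₂
    simp [zarg, List.getElem_ofFn, List.getElem_zipWith, List.get]

/-! ### β-conversion toolkit -/

lemma BetaConv.rfl {M : Term} : BetaConv M M := EqvGen.refl M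
lemma BetaConv.symm' {M N : Term} (h : BetaConv M N) : BetaConv N M := EqvGen.symm _ _ h
lemma BetaConv.trans' {M N P : Term} (h₁ : BetaConv M N) (h₂ : BetaConv N P) : BetaConv M P :=
  EqvGen.trans _ _ _ h₁ h₂
lemma BetaConv.of_beta {M N : Term} (h : Beta M N) : BetaConv M N := EqvGen.rel _ _ h

lemma BetaConv.appL {M M' : Term} (N : Term) (h : BetaConv M M') :
    BetaConv (Term.app M N) (Term.app M' N) := by
  induction h with
  | rel a b hab => exact EqvGen.rel _ _ (Beta.appL _ hab)
  | refl a => exact EqvGen.refl _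
  | symm a b _ ih => exact EqvGen.symm _ _ ih
  | trans a b c _ _ ih₁ ih₂ => exact EqvGen.trans _ _ _ ih₁ ih₂

lemma BetaConv.appR (M : Term) {N N' : Term} (h : BetaConv N N') :
    BetaConv (Term.app M N) (Term.app M N') := by
  induction h with
  | rel a b hab => exact EqvGen.rel _ _ (Beta.appR _ hab)
  | refl a => exact EqvGen.refl _
  | symm a b _ ih => exact EqvGen.symm _ _ ih
  | trans a b c _ _ ih₁ ih₂ => exact EqvGen.trans _ _ _ ih₁ ih₂

lemma BetaConv.lam (x : ℕ) {M M' : Term} (h : BetaConv M M') :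
    BetaConv (Term.lam x M) (Term.lam x M') := by
  induction h with
  | rel a b hab => exact EqvGen.rel _ _ (Beta.lam _ hab)
  | refl a => exact EqvGen.refl _
  | symm a b _ ih => exact EqvGen.symm _ _ ih
  | trans a b c _ _ ih₁ ih₂ => exact EqvGen.trans _ _ _ ih₁ ih₂

lemma BetaConv.app_congr {M M' N N' : Term} (h₁ : BetaConv M M') (h₂ : BetaConv N N') :
    BetaConv (Term.app M N) (Term.app M' N') :=
  (BetaConv.appL N h₁).trans' (BetaConv.appR M' h₂)

lemma BetaConv.lamList (ys : List ℕ) {M M' : Term} (h : BetaConv M M') :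
    BetaConv (lamList ys M) (lamList ys M') := by
  induction ys with
  | nil => simpa using h
  | cons y ys ih => exact BetaConv.lam y ih

lemma BetaConv.appList_left {M M' : Term} (as : List Term) (h : BetaConv M M') :
    BetaConv (appList M as) (appList M' as) := by
  induction as generalizing M M' with
  | nil => simpa using h
  | cons a as ih => exact ih (BetaConv.appL a h)

lemma BetaConv.appList_args {H : Term} {as as' : List Term}
    (h : List.Forall₂ BetaConv as as') : BetaConv (appList H as) (appList H as') := by
  induction h generalizing H with
  | nil => exact BetaConv.rfl
  | cons hab _ ih =>
      exact (BetaConv.appList_left _ (BetaConv.appR H hab)).trans' (ih (H := _))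

lemma Beta.appList_left {M M' : Term} (as : List Term) (h : Beta M M') :
    Beta (appList M as) (appList M' as) := by
  induction as generalizing M M' with
  | nil => simpa using h
  | cons a as ih => exact ih (Beta.appL a h)

/-! ### substitution through list constructions -/

lemma subst_lamList {x : ℕ} {ys : List ℕ} (hx : x ∉ ys) (M N : Term) :
    Term.subst (lamList ys M) x N = lamList ys (Term.subst M x N) := by
  induction ys with
  | nil => rfl
  | cons y ys ih =>
      simp only [List.mem_cons, not_or] at hx
      rw [lamList_cons, lamList_cons]
      show (Term.lam y (lamList ys M)).subst x N = _
      simp only [Term.subst]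
      rw [if_neg (fun h : y = x => hx.1 h.symm), ih hx.2]

lemma subst_appList (H : Term) (as : List Term) (x : ℕ) (N : Term) :
    Term.subst (appList H as) x N
      = appList (Term.subst H x N) (as.map (fun a => Term.subst a x N)) := by
  induction as generalizing H with
  | nil => rfl
  | cons a as ih => simp [Term.subst, ih]

lemma subst_zarg {x : ℕ} {ys : List ℕ} {Ps : List Term} (hx : x ∉ ys)
    (hP : ∀ P ∈ Ps, x ∉ fv P) (N : Term) :
    (zarg Ps ys).map (fun a => Term.subst a x N) = zarg Ps ys := by
  induction Ps generalizing ys with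
  | nil => rfl
  | cons P Ps ih =>
      cases ys with
      | nil => rfl
      | cons y ys =>
          simp only [List.mem_cons, not_or] at hx
          simp only [zarg_cons, List.map_cons, Term.subst,
            Term.subst_eq_self N (hP P (by simp)),
            ih hx.2 (fun Q hQ => hP Q (by simp [hQ]))]
          rw [if_neg (fun h : y = x => hx.1 h.symm)]

/-! ### fv / vset through list constructions; FHInf helpers -/

lemma fv_lamList (ys : List ℕ) (M : Term) :
    fv (lamList ys M) = fv M \ ys.toFinset := by
  induction ys with
  | nil => simp
  | cons y ys ih =>
      rw [lamList_cons]
      rw [show fv (Term.lam y (lamList ys M)) = fv (lamList ys M) \ {y} from rfl, ih]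
      ext a; simp [List.toFinset_cons]; tauto

lemma fv_appList (H : Term) (as : List Term) :
    fv (appList H as) = fv H ∪ as.foldr (fun a s => fv a ∪ s) ∅ := by
  induction as generalizing H with
  | nil => simp
  | cons a as ih =>
      simp only [appList_cons, ih, fv, List.foldr_cons]
      ac_rfl

lemma vset_lamList (ys : List ℕ) (M : Term) :
    vset (lamList ys M) = ys.toFinset ∪ vset M := by
  induction ys with
  | nil => simp
  | cons y ys ih =>
      rw [lamList_cons]
      rw [show vset (Term.lam y (lamList ys M)) = insert y (vset (lamList ys M)) from rfl, ih]
      simp [Finset.insert_union]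

lemma vset_appList (H : Term) (as : List Term) :
    vset (appList H as) = vset H ∪ as.foldr (fun a s => vset a ∪ s) ∅ := by
  induction as generalizing H with
  | nil => simp
  | cons a as ih =>
      simp only [appList_cons, ih, vset, List.foldr_cons]
      ac_rfl

lemma foldr_fvu_zarg (Ps : List Term) (ys : List ℕ) (hc : ∀ P ∈ Ps, fv P = ∅)
    (hlen : Ps.length = ys.length) :
    (zarg Ps ys).foldr (fun a s => fv a ∪ s) ∅ = ys.toFinset := by
  induction Ps generalizing ys with
  | nil => cases ys with
    | nil => simp
    | cons y ys => simp at hlen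
  | cons P Ps ih =>
      cases ys with
      | nil => simp at hlen
      | cons y ys =>
          simp only [zarg_cons, List.foldr_cons, fv, hc P (by simp), List.toFinset_cons]
          rw [ih ys (fun Q hQ => hc Q (by simp [hQ])) (by simpa using hlen)]
          ext a; simp [or_comm]

/-! ### FHInf helpers, sizes, fresh variables -/

attribute [simp] Term.size

lemma size_pos : ∀ M : Term, 0 < Term.size M := by
  intro M; cases M <;> simp [Term.size]

lemma FHInf.mk' (x : ℕ) (ys : List ℕ) (Ps : List Term) (hlen : Ps.length = ys.length)
    (hx : x ∉ ys) (hnd : ys.Nodup) (hPs : ∀ P ∈ Ps, FHInf P) :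
    FHInf (Term.lam x (lamList ys (appList (Term.var x) (zarg Ps ys)))) := by
  have := FHInf.mk x ys Ps hlen hx hnd hPs
  rwa [ofFn_eq_zarg ys Ps hlen] at this

lemma FHInf.elim' {t : Term} (h : FHInf t) :
    ∃ x ys Ps, Ps.length = ys.length ∧ x ∉ ys ∧ ys.Nodup ∧ (∀ P ∈ Ps, FHInf P) ∧
      t = Term.lam x (lamList ys (appList (Term.var x) (zarg Ps ys))) := by
  cases h with
  | mk x ys Ps hlen hx hnd hPs =>
      exact ⟨x, ys, Ps, hlen, hx, hnd, hPs, by rw [ofFn_eq_zarg ys Ps hlen]⟩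

lemma fhinf_id (z : ℕ) : FHInf (Term.lam z (Term.var z)) := by
  have := FHInf.mk' z [] [] rfl (by simp) (by simp) (by simp)
  simpa using this

lemma fhinf_closed {t : Term} (h : FHInf t) : fv t = ∅ := by
  induction h with
  | mk x ys Ps hlen hx hnd hPs ih =>
      rw [ofFn_eq_zarg ys Ps hlen]
      rw [show fv (Term.lam x (lamList ys (appList (Term.var x) (zarg Ps ys))))
            = fv (lamList ys (appList (Term.var x) (zarg Ps ys))) \ {x} from rfl]
      rw [fv_lamList, fv_appList, foldr_fvu_zarg Ps ys ih hlen]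
      ext a
      simp only [Finset.mem_sdiff, Finset.mem_union, List.mem_toFinset,
        Finset.notMem_empty, iff_false, Finset.mem_singleton]
      rintro ⟨⟨h1 | h1, h2⟩, h3⟩
      · exact h3 (by simpa [fv] using h1)
      · exact h2 h1

lemma size_le_appList (H : Term) (as : List Term) : Term.size H ≤ Term.size (appList H as) := by
  induction as generalizing H with
  | nil => simp
  | cons a as ih =>
      calc Term.size H ≤ Term.size (Term.app H a) := by simp; omega
      _ ≤ _ := ih _

lemma size_lt_appList {a : Term} {as : List Term} (H : Term) (h : a ∈ as) :
    Term.size a < Term.size (appList H as) := by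
  induction as generalizing H with
  | nil => simp at h
  | cons b as ih =>
      rcases List.mem_cons.mp h with rfl | h
      · calc Term.size a < Term.size (Term.app H a) := by simp
        _ ≤ _ := size_le_appList _ _
      · exact ih _ h

lemma size_le_lamList (ys : List ℕ) (M : Term) :
    Term.size M ≤ Term.size (lamList ys M) := by
  induction ys with
  | nil => simp
  | cons y ys ih => calc Term.size M ≤ _ := ih
                    _ ≤ _ := by rw [lamList_cons]; simp

lemma mem_zarg_of_mem {Ps : List Term} {ys : List ℕ} {P : Term}
    (hlen : Ps.length = ys.length) (h : P ∈ Ps) :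
    ∃ y ∈ ys, Term.app P (Term.var y) ∈ zarg Ps ys := by
  induction Ps generalizing ys with
  | nil => simp at h
  | cons Q Ps ih =>
      cases ys with
      | nil => simp at hlen
      | cons y ys =>
          rcases List.mem_cons.mp h with rfl | h
          · exact ⟨y, by simp, by simp⟩
          · obtain ⟨y', hy', hm⟩ := ih (by simpa using hlen) h
            exact ⟨y', by simp [hy'], by simp [hm]⟩

lemma size_lt_of_fhinf_arg {x : ℕ} {ys : List ℕ} {Ps : List Term} {P : Term}
    (hlen : Ps.length = ys.length) (h : P ∈ Ps) :
    Term.size P < Term.size (Term.lam x (lamList ys (appList (Term.var x) (zarg Ps ys)))) := by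
  obtain ⟨y, _, hm⟩ := mem_zarg_of_mem hlen h
  have h1 : Term.size (Term.app P (Term.var y)) < Term.size (appList (Term.var x) (zarg Ps ys)) :=
    size_lt_appList _ hm
  have h2 := size_le_lamList ys (appList (Term.var x) (zarg Ps ys))
  simp only [Term.size] at *
  omega

lemma vset_subset_of_mem_foldr {a : Term} {as : List Term} (h : a ∈ as) :
    Term.vset a ⊆ as.foldr (fun b s => Term.vset b ∪ s) ∅ := by
  induction as with
  | nil => simp at h
  | cons b as ih =>
      rcases List.mem_cons.mp h with rfl | h
      · simp [Finset.subset_union_left]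
      · exact Finset.Subset.trans (ih h) (by simp [Finset.subset_union_right])

lemma vset_fhinf_arg {x : ℕ} {ys : List ℕ} {Ps : List Term} {P : Term}
    (hlen : Ps.length = ys.length) (h : P ∈ Ps) :
    Term.vset P ⊆ Term.vset (Term.lam x (lamList ys (appList (Term.var x) (zarg Ps ys)))) := by
  obtain ⟨y, _, hm⟩ := mem_zarg_of_mem hlen h
  intro a ha
  rw [show Term.vset (Term.lam x (lamList ys (appList (Term.var x) (zarg Ps ys))))
      = insert x (Term.vset (lamList ys (appList (Term.var x) (zarg Ps ys)))) from rfl]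
  rw [vset_lamList, vset_appList]
  have h₂ : a ∈ (zarg Ps ys).foldr (fun b s => Term.vset b ∪ s) ∅ :=
    vset_subset_of_mem_foldr hm (show a ∈ Term.vset (Term.app P (Term.var y)) by
      simp [Term.vset, ha])
  simp only [Finset.mem_insert, Finset.mem_union]
  tauto

lemma ys_subset_vset {x : ℕ} {ys : List ℕ} {M : Term} :
    ys.toFinset ⊆ Term.vset (Term.lam x (lamList ys M)) := by
  intro a ha
  rw [show Term.vset (Term.lam x (lamList ys M)) = insert x (Term.vset (lamList ys M)) from rfl,
    vset_lamList]
  simp only [Finset.mem_insert, Finset.mem_union]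
  tauto

lemma x_mem_vset {x : ℕ} {M : Term} : x ∈ Term.vset (Term.lam x M) := by
  simp [Term.vset]

/-- fresh variable lemmas -/
lemma freshVar_add_not_mem (s : Finset ℕ) (k : ℕ) : freshVar s + k ∉ s := by
  intro h
  have h2 : freshVar s + k ≤ s.sup id := Finset.le_sup (f := id) h
  unfold freshVar at h2
  omega

lemma freshVar_not_mem (s : Finset ℕ) : freshVar s ∉ s := by
  simpa using freshVar_add_not_mem s 0

def freshList (n : ℕ) (s : Finset ℕ) : List ℕ :=
  (List.range n).map (fun i => freshVar s + i)

@[simp] lemma freshList_length (n : ℕ) (s : Finset ℕ) : (freshList n s).length = n := by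
  simp [freshList]

lemma freshList_nodup (n : ℕ) (s : Finset ℕ) : (freshList n s).Nodup := by
  refine (List.nodup_range (n := n)).map ?_
  intro a b h
  simpa using h

lemma freshList_fresh {n : ℕ} {s : Finset ℕ} {y : ℕ} (h : y ∈ freshList n s) : y ∉ s := by
  simp only [freshList, List.mem_map, List.mem_range] at h
  obtain ⟨i, _, rfl⟩ := h
  exact freshVar_add_not_mem s i

/-! ### head β-reduction and the composition lemma -/

lemma headBeta (x : ℕ) (ys : List ℕ) (Ps : List Term) (H : Term)
    (hx : x ∉ ys) (hc : ∀ P ∈ Ps, fv P = ∅) :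
    Beta (Term.app (Term.lam x (lamList ys (appList (Term.var x) (zarg Ps ys)))) H)
      (lamList ys (appList H (zarg Ps ys))) := by
  have h := Beta.beta x (lamList ys (appList (Term.var x) (zarg Ps ys))) H
  rw [subst_lamList hx, subst_appList,
    subst_zarg hx (fun P hP => by simp [hc P hP]) H,
    show (Term.var x).subst x H = H by simp [Term.subst]] at h
  exact h

lemma reduce_full : ∀ (us : List ℕ) (Ps : List Term) (as pre : List Term) (x : ℕ),
    Ps.length = us.length → us.Nodup → x ∉ us → (∀ P ∈ Ps, fv P = ∅) →
    (∀ u ∈ us, ∀ a ∈ as, u ∉ fv a) → (∀ u ∈ us, ∀ a ∈ pre, u ∉ fv a) →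
    BetaConv (appList (lamList us (appList (Term.var x) (pre ++ zarg Ps us))) as)
      (lamList (us.drop as.length)
        (appList (Term.var x)
          (pre ++ List.zipWith Term.app Ps as ++ zarg (Ps.drop as.length) (us.drop as.length)
            ++ as.drop us.length)))
  | [], Ps, as, pre, x => by
      intro hlen _ _ _ _ _
      rw [List.length_eq_zero_iff.mp hlen]
      simp only [zarg_nil_left, List.append_nil, lamList_nil, List.zipWith_nil_left,
        List.drop_nil, List.drop_zero, appList_append]
      exact BetaConv.rfl
  | u :: us, Ps, [], pre, x => by
      intro hlen hnd hx hc h1 h2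
      simp only [List.length_nil, List.drop_zero, List.zipWith_nil_right, List.append_nil,
        List.nil_append, List.drop_nil, appList_nil]
      exact BetaConv.rfl
  | u :: us, Ps, a :: as, pre, x => by
      intro hlen hnd hx hc h1 h2
      cases Ps with
      | nil => simp at hlen
      | cons P Ps =>
          simp only [List.length_cons, Nat.succ.injEq] at hlen
          simp only [List.nodup_cons] at hnd
          simp only [List.mem_cons, not_or] at hx
          -- the single β-step
          have hstep : Beta
              (appList (lamList (u :: us) (appList (Term.var x) (pre ++ zarg (P :: Ps) (u :: us)))) (a :: as))
              (appList (lamList us (appList (Term.var x) ((pre ++ [Term.app P a]) ++ zarg Ps us))) as) := by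
            rw [show appList (lamList (u :: us) (appList (Term.var x) (pre ++ zarg (P :: Ps) (u :: us)))) (a :: as)
                = appList (Term.app (Term.lam u (lamList us (appList (Term.var x) (pre ++ zarg (P :: Ps) (u :: us))))) a) as from rfl]
            apply Beta.appList_left
            have h := Beta.beta u (lamList us (appList (Term.var x) (pre ++ zarg (P :: Ps) (u :: us)))) a
            rw [subst_lamList hnd.1, subst_appList,
              show (Term.var x).subst u a = Term.var x by simp [Term.subst, fun h : x = u => hx.1 h]] at h
            rw [List.map_append] at h
            rw [show pre.map (fun b => b.subst u a) = pre from
              List.map_congr_left (fun b hb => Term.subst_eq_self a (h2 u (by simp) b hb)) |>.trans (List.map_id pre)] at h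
            rw [show (zarg (P :: Ps) (u :: us)).map (fun b => b.subst u a)
                = Term.app P a :: zarg Ps us from by
              simp only [zarg_cons, List.map_cons]
              rw [Term.subst, Term.subst_eq_self a (by simp [hc P (by simp)]),
                show (Term.var u).subst u a = a by simp [Term.subst],
                subst_zarg hnd.1 (fun Q hQ => by simp [hc Q (by simp [hQ])]) a]] at h
            rw [show pre ++ Term.app P a :: zarg Ps us = (pre ++ [Term.app P a]) ++ zarg Ps us by simp] at h
            exact h
          refine (BetaConv.of_beta hstep).trans' ?_
          have ih := reduce_full us Ps as (pre ++ [Term.app P a]) x hlen hnd.2 hx.2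
            (fun Q hQ => hc Q (by simp [hQ]))
            (fun v hv b hb => h1 v (by simp [hv]) b (by simp [hb]))
            (fun v hv b hb => by
              rcases List.mem_append.mp hb with hb | hb
              · exact h2 v (by simp [hv]) b hb
              · rw [List.mem_singleton.mp hb]
                simp only [fv, Finset.mem_union, not_or]
                exact ⟨by simp [hc P (by simp)], h1 v (by simp [hv]) a (by simp)⟩)
          refine ih.trans' ?_
          simp only [List.length_cons, List.drop_succ_cons, List.zipWith_cons_cons]
          rw [show pre ++ Term.app P a :: List.zipWith Term.app Ps as
              = (pre ++ [Term.app P a]) ++ List.zipWith Term.app Ps as by simp]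
          exact BetaConv.rfl

/-! ### helper list lemmas -/

lemma forall2_rfl {R : Term → Term → Prop} (hR : ∀ a, R a a) : ∀ l, List.Forall₂ R l l
  | [] => List.Forall₂.nil
  | a :: l => List.Forall₂.cons (hR a) (forall2_rfl hR l)

lemma forall2_append {R : Term → Term → Prop} :
    ∀ {l₁ l₂ l₃ l₄ : List Term}, List.Forall₂ R l₁ l₂ → List.Forall₂ R l₃ l₄ →
      List.Forall₂ R (l₁ ++ l₃) (l₂ ++ l₄) := by
  intro l₁ l₂ l₃ l₄ h₁ h₂
  induction h₁ with
  | nil => simpa using h₂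
  | cons h _ ih => exact List.Forall₂.cons h ih

lemma mem_zarg_elim {a : Term} : ∀ {Ps : List Term} {ys : List ℕ}, a ∈ zarg Ps ys →
      ∃ P ∈ Ps, ∃ y ∈ ys, a = Term.app P (Term.var y)
  | [], ys, h => by simp at h
  | P :: Ps, [], h => by simp at h
  | P :: Ps, y :: ys, h => by
      rcases List.mem_cons.mp h with rfl | h
      · exact ⟨P, by simp, y, by simp, rfl⟩
      · obtain ⟨P', hP', y', hy', rfl⟩ := mem_zarg_elim h
        exact ⟨P', by simp [hP'], y', by simp [hy'], rfl⟩

lemma zarg_drop : ∀ (k : ℕ) (Ps : List Term) (ys : List ℕ),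
    (zarg Ps ys).drop k = zarg (Ps.drop k) (ys.drop k)
  | 0, _, _ => by simp
  | k + 1, [], ys => by simp
  | k + 1, P :: Ps, [] => by simp
  | k + 1, P :: Ps, y :: ys => by
      simp only [zarg_cons, List.drop_succ_cons]
      exact zarg_drop k Ps ys

lemma zarg_append' : ∀ (Ps Qs : List Term) (ys : List ℕ),
    zarg (Ps ++ Qs) ys = zarg Ps ys ++ zarg Qs (ys.drop Ps.length)
  | [], Qs, ys => by simp
  | P :: Ps, Qs, [] => by simp
  | P :: Ps, Qs, y :: ys => by
      simp only [List.cons_append, zarg_cons, List.length_cons, List.drop_succ_cons]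
      rw [zarg_append' Ps Qs ys]

lemma foldr_vset_zarg_subset {Ps : List Term} {ys : List ℕ} {S : Finset ℕ}
    (hP : ∀ P ∈ Ps, Term.vset P ⊆ S) (hy : ∀ y ∈ ys, y ∈ S) :
    (zarg Ps ys).foldr (fun a s => Term.vset a ∪ s) ∅ ⊆ S := by
  induction Ps generalizing ys with
  | nil => simp
  | cons P Ps ih =>
      cases ys with
      | nil => simp
      | cons y ys =>
          simp only [zarg_cons, List.foldr_cons]
          apply Finset.union_subset
          · rw [show Term.vset (Term.app P (Term.var y)) = Term.vset P ∪ {y} from rfl]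
            exact Finset.union_subset (hP P (by simp)) (by simp [hy y (by simp)])
          · exact ih (fun Q hQ => hP Q (by simp [hQ])) (fun w hw => hy w (by simp [hw]))

/-! ### the composition lemma -/

lemma comp_fhinf : ∀ (n : ℕ) (N₁ N₂ : Term) (x : ℕ),
    Term.size N₁ + Term.size N₂ ≤ n → FHInf N₁ → FHInf N₂ →
    Disjoint (Term.vset N₁) (Term.vset N₂) → x ∉ Term.vset N₁ → x ∉ Term.vset N₂ →
    ∃ R, FHInf R ∧ BetaConv (Term.lam x (Term.app N₂ (Term.app N₁ (Term.var x)))) R ∧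
      Term.vset R ⊆ insert x (Term.vset N₁ ∪ Term.vset N₂) := by
  intro n
  induction n using Nat.strong_induction_on with
  | _ n IH =>
    intro N₁ N₂ x hsize h₁ h₂ hdisj hx₁ hx₂
    obtain ⟨u, us, Ps, hlen₁, hu, hndu, hPs, hN₁⟩ := h₁.elim'
    obtain ⟨v, vs, Qs, hlen₂, hv, hndv, hQs, hN₂⟩ := h₂.elim'
    subst hN₁; subst hN₂
    set N₁ := Term.lam u (lamList us (appList (Term.var u) (zarg Ps us))) with hN₁
    set N₂ := Term.lam v (lamList vs (appList (Term.var v) (zarg Qs vs))) with hN₂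
    set S : Finset ℕ := insert x (Term.vset N₁ ∪ Term.vset N₂) with hS
    have hPc : ∀ P ∈ Ps, fv P = ∅ := fun P hP => fhinf_closed (hPs P hP)
    have hQc : ∀ Q ∈ Qs, fv Q = ∅ := fun Q hQ => fhinf_closed (hQs Q hQ)
    have hus_N₁ : ∀ w ∈ us, w ∈ Term.vset N₁ := fun w hw =>
      ys_subset_vset (List.mem_toFinset.mpr hw)
    have hvs_N₂ : ∀ w ∈ vs, w ∈ Term.vset N₂ := fun w hw =>
      ys_subset_vset (List.mem_toFinset.mpr hw)
    have hus_vs : ∀ w ∈ us, w ∉ vs := fun w hw hw' =>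
      Finset.disjoint_left.mp hdisj (hus_N₁ w hw) (hvs_N₂ w hw')
    have hx_us : x ∉ us := fun h => hx₁ (hus_N₁ x h)
    have hx_vs : x ∉ vs := fun h => hx₂ (hvs_N₂ x h)
    have hPv : ∀ P ∈ Ps, Term.vset P ⊆ Term.vset N₁ := fun P hP => vset_fhinf_arg hlen₁ hP
    have hQv : ∀ Q ∈ Qs, Term.vset Q ⊆ Term.vset N₂ := fun Q hQ => vset_fhinf_arg hlen₂ hQ
    have hzQlen : (zarg Qs vs).length = vs.length := by
      rw [zarg_length, hlen₂, min_self]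
    -- recursive composition of the argument identities
    have REC : ∀ (Ps' Qs' : List Term) (vs' : List ℕ),
        (∀ P ∈ Ps', P ∈ Ps) → (∀ Q ∈ Qs', Q ∈ Qs) → (∀ w ∈ vs', w ∈ vs) →
        ∃ Rs : List Term,
          Rs.length = min Ps'.length (min Qs'.length vs'.length) ∧
          (∀ R ∈ Rs, FHInf R ∧ Term.vset R ⊆ S) ∧
          List.Forall₂ BetaConv (List.zipWith Term.app Ps' (zarg Qs' vs')) (zarg Rs vs') := by
      intro Ps'
      induction Ps' with
      | nil => intro Qs' vs' _ _ _; exact ⟨[], by simp, by simp, by simp [zarg]⟩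
      | cons P Ps' ihP =>
          intro Qs' vs' hsub₁ hsub₂ hsub₃
          cases Qs' with
          | nil => exact ⟨[], by simp, by simp, by simp [zarg]⟩
          | cons Q Qs' =>
            cases vs' with
            | nil => exact ⟨[], by simp, by simp, by simp [zarg]⟩
            | cons w vs' =>
              obtain ⟨Rs, hRlen, hRprop, hRconv⟩ := ihP Qs' vs'
                (fun a ha => hsub₁ a (by simp [ha])) (fun a ha => hsub₂ a (by simp [ha]))
                (fun a ha => hsub₃ a (by simp [ha]))
              have hPmem := hsub₁ P (by simp)
              have hQmem := hsub₂ Q (by simp)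
              have hsz : Term.size Q + Term.size P ≤ n - 1 := by
                have s1 : Term.size P < Term.size N₁ := size_lt_of_fhinf_arg hlen₁ hPmem
                have s2 : Term.size Q < Term.size N₂ := size_lt_of_fhinf_arg hlen₂ hQmem
                omega
              have hn1 : n - 1 < n := by
                have h0 : 0 < Term.size N₁ := size_pos N₁
                omega
              obtain ⟨R, hRf, hRconv₀, hRv⟩ := IH (n-1) hn1 Q P x hsz (hQs Q hQmem) (hPs P hPmem)
                (Finset.disjoint_of_subset_left (hQv Q hQmem)
                  (Finset.disjoint_of_subset_right (hPv P hPmem) hdisj.symm))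
                (fun h => hx₂ (hQv Q hQmem h)) (fun h => hx₁ (hPv P hPmem h))
              refine ⟨R :: Rs, by simp only [List.length_cons, hRlen]; omega, ?_, ?_⟩
              · intro R' hR'
                rcases List.mem_cons.mp hR' with rfl | hR'
                · refine ⟨hRf, hRv.trans ?_⟩
                  rw [hS]
                  intro a ha
                  simp only [Finset.mem_insert, Finset.mem_union] at ha ⊢
                  rcases ha with rfl | ha | ha
                  · tauto
                  · exact Or.inr (Or.inr (hQv Q hQmem ha))
                  · exact Or.inr (Or.inl (hPv P hPmem ha))
                · exact hRprop R' hR'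
              · simp only [zarg_cons, List.zipWith_cons_cons]
                refine List.Forall₂.cons ?_ hRconv
                have hb : Beta (Term.app (Term.lam x (Term.app P (Term.app Q (Term.var x)))) (Term.var w))
                    (Term.app P (Term.app Q (Term.var w))) := by
                  have h := Beta.beta x (Term.app P (Term.app Q (Term.var x))) (Term.var w)
                  rw [show (Term.app P (Term.app Q (Term.var x))).subst x (Term.var w)
                      = Term.app P (Term.app Q (Term.var w)) from by
                    have hP0 : P.subst x (Term.var w) = P :=
                      Term.subst_eq_self _ (by simp [hPc P hPmem])
                    have hQ0 : Q.subst x (Term.var w) = Q :=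
                      Term.subst_eq_self _ (by simp [hQc Q hQmem])
                    simp [Term.subst, hP0, hQ0]] at h
                  exact h
                exact ((BetaConv.of_beta hb).symm').trans' (BetaConv.appL _ hRconv₀)
    obtain ⟨Rs, hRlen, hRprop, hRconv⟩ := REC Ps Qs vs (fun _ h => h) (fun _ h => h) (fun _ h => h)
    -- the β-conversion to the composite normal form candidate
    have husfv : ∀ w ∈ us, ∀ a ∈ zarg Qs vs, w ∉ fv a := by
      intro w hw a ha
      obtain ⟨Q, hQ, y, hy, rfl⟩ := mem_zarg_elim ha
      rw [show fv (Term.app Q (Term.var y)) = fv Q ∪ {y} from rfl, hQc Q hQ]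
      simp only [Finset.empty_union, Finset.mem_singleton]
      exact fun h => (hus_vs w hw) (h ▸ hy)
    have hred := reduce_full us Ps (zarg Qs vs) [] x hlen₁ hndu hx_us hPc husfv (by simp)
    rw [List.nil_append, List.nil_append, hzQlen] at hred
    have c1 : BetaConv (Term.app N₁ (Term.var x)) (lamList us (appList (Term.var x) (zarg Ps us))) :=
      BetaConv.of_beta (headBeta u us Ps (Term.var x) hu hPc)
    have c3 : BetaConv (Term.app N₂ (Term.app N₁ (Term.var x)))
        (lamList vs (appList (lamList us (appList (Term.var x) (zarg Ps us))) (zarg Qs vs))) :=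
      (BetaConv.appR N₂ c1).trans'
        (BetaConv.of_beta (headBeta v vs Qs (lamList us (appList (Term.var x) (zarg Ps us))) hv hQc))
    have c4 : BetaConv (Term.app N₂ (Term.app N₁ (Term.var x)))
        (lamList vs (lamList (us.drop vs.length)
          (appList (Term.var x)
            (List.zipWith Term.app Ps (zarg Qs vs)
              ++ zarg (Ps.drop vs.length) (us.drop vs.length)
              ++ (zarg Qs vs).drop us.length)))) :=
      c3.trans' (BetaConv.lamList vs hred)
    have c5 : BetaConv (Term.app N₂ (Term.app N₁ (Term.var x)))
        (lamList vs (lamList (us.drop vs.length)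
          (appList (Term.var x)
            (zarg Rs vs ++ zarg (Ps.drop vs.length) (us.drop vs.length)
              ++ (zarg Qs vs).drop us.length)))) := by
      refine c4.trans' (BetaConv.lamList vs (BetaConv.lamList _ (BetaConv.appList_args ?_)))
      exact forall2_append (forall2_append hRconv (forall2_rfl (fun _ => BetaConv.rfl) _))
        (forall2_rfl (fun _ => BetaConv.rfl) _)
    -- now case on which side is longer
    by_cases hmn : vs.length ≤ us.length
    · -- vs shorter or equal
      have hCnil : (zarg Qs vs).drop us.length = [] :=
        List.drop_eq_nil_of_le (by rw [hzQlen]; exact hmn)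
      have hRslen : Rs.length = vs.length := by
        rw [hRlen, hlen₁, hlen₂]; omega
      have hbody : lamList vs (lamList (us.drop vs.length)
            (appList (Term.var x)
              (zarg Rs vs ++ zarg (Ps.drop vs.length) (us.drop vs.length)
                ++ (zarg Qs vs).drop us.length)))
          = lamList (vs ++ us.drop vs.length)
              (appList (Term.var x)
                (zarg (Rs ++ Ps.drop vs.length) (vs ++ us.drop vs.length))) := by
        rw [hCnil, List.append_nil, lamList_append, zarg_append hRslen]
      refine ⟨Term.lam x (lamList (vs ++ us.drop vs.length)
          (appList (Term.var x) (zarg (Rs ++ Ps.drop vs.length) (vs ++ us.drop vs.length)))),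
        ?_, ?_, ?_⟩
      · apply FHInf.mk'
        · simp only [List.length_append, List.length_drop, hRslen, hlen₁]
        · intro h
          rcases List.mem_append.mp h with h | h
          · exact hx_vs h
          · exact hx_us (List.mem_of_mem_drop h)
        · refine List.Nodup.append hndv (hndu.sublist (List.drop_sublist _ _)) ?_
          intro a ha ha'
          exact hus_vs a (List.mem_of_mem_drop ha') ha
        · intro P hP
          rcases List.mem_append.mp hP with h | h
          · exact (hRprop P h).1
          · exact hPs P (List.mem_of_mem_drop h)
      · rw [← hbody]
        exact BetaConv.lam x c5
      · rw [show Term.vset (Term.lam x (lamList (vs ++ us.drop vs.length)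
              (appList (Term.var x) (zarg (Rs ++ Ps.drop vs.length) (vs ++ us.drop vs.length)))))
            = insert x (Term.vset (lamList (vs ++ us.drop vs.length)
              (appList (Term.var x) (zarg (Rs ++ Ps.drop vs.length) (vs ++ us.drop vs.length)))))
            from rfl, vset_lamList, vset_appList]
        rw [hS]
        apply Finset.insert_subset (by simp)
        apply Finset.union_subset
        · intro a ha
          simp only [List.mem_toFinset, List.mem_append] at ha
          rcases ha with h | h
          · exact Finset.mem_insert_of_mem (Finset.mem_union_right _ (hvs_N₂ a h))
          · exact Finset.mem_insert_of_mem (Finset.mem_union_left _ (hus_N₁ a (List.mem_of_mem_drop h)))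
        · apply Finset.union_subset (by simp [Term.vset])
          apply foldr_vset_zarg_subset
          · intro P hP
            rcases List.mem_append.mp hP with h | h
            · exact (hRprop P h).2
            · exact (hPv P (List.mem_of_mem_drop h)).trans (by intro a ha; simp [ha])
          · intro y hy
            rcases List.mem_append.mp hy with h | h
            · exact Finset.mem_insert_of_mem (Finset.mem_union_right _ (hvs_N₂ y h))
            · exact Finset.mem_insert_of_mem (Finset.mem_union_left _ (hus_N₁ y (List.mem_of_mem_drop h)))
    · -- us strictly shorter
      have hlt : us.length < vs.length := by omega
      have husnil : us.drop vs.length = [] := List.drop_eq_nil_of_le (by omega)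
      have hPsnil : Ps.drop vs.length = [] := List.drop_eq_nil_of_le (by rw [hlen₁]; omega)
      have hCeq : (zarg Qs vs).drop us.length = zarg (Qs.drop us.length) (vs.drop us.length) :=
        zarg_drop _ _ _
      have hRslen : Rs.length = us.length := by
        rw [hRlen, hlen₁, hlen₂]; omega
      have hbody : lamList vs (lamList (us.drop vs.length)
            (appList (Term.var x)
              (zarg Rs vs ++ zarg (Ps.drop vs.length) (us.drop vs.length)
                ++ (zarg Qs vs).drop us.length)))
          = lamList vs (appList (Term.var x) (zarg (Rs ++ Qs.drop us.length) vs)) := by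
        rw [husnil, hPsnil, hCeq, zarg_append' Rs (Qs.drop us.length) vs, hRslen]
        simp
      refine ⟨Term.lam x (lamList vs (appList (Term.var x) (zarg (Rs ++ Qs.drop us.length) vs))),
        ?_, ?_, ?_⟩
      · apply FHInf.mk'
        · simp only [List.length_append, List.length_drop, hRslen, hlen₂]
          omega
        · exact hx_vs
        · exact hndv
        · intro P hP
          rcases List.mem_append.mp hP with h | h
          · exact (hRprop P h).1
          · exact hQs P (List.mem_of_mem_drop h)
      · rw [← hbody]
        exact BetaConv.lam x c5
      · rw [show Term.vset (Term.lam x (lamList vs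
              (appList (Term.var x) (zarg (Rs ++ Qs.drop us.length) vs))))
            = insert x (Term.vset (lamList vs
              (appList (Term.var x) (zarg (Rs ++ Qs.drop us.length) vs)))) from rfl,
          vset_lamList, vset_appList]
        rw [hS]
        apply Finset.insert_subset (by simp)
        apply Finset.union_subset
        · intro a ha
          simp only [List.mem_toFinset] at ha
          exact Finset.mem_insert_of_mem (Finset.mem_union_right _ (hvs_N₂ a ha))
        · apply Finset.union_subset (by simp [Term.vset])
          apply foldr_vset_zarg_subset
          · intro P hP
            rcases List.mem_append.mp hP with h | h
            · exact (hRprop P h).2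
            · exact (hQv P (List.mem_of_mem_drop h)).trans (by intro a ha; simp [ha])
          · intro y hy
            exact Finset.mem_insert_of_mem (Finset.mem_union_right _ (hvs_N₂ y hy))

/-! ### typing toolkit -/

lemma envDisj_nil (Γ : Env) : EnvDisj [] Γ := by
  intro x hx
  simp [Env.dom] at hx

lemma envDisj_single {Γ : Env} {y : ℕ} (σ : Ty) (h : y ∉ Γ.dom) : EnvDisj Γ [(y, σ)] := by
  intro a ha
  simp only [Env.dom, List.map_cons, List.map_nil, List.mem_singleton]
  rintro rfl
  exact h ha

lemma Deriv.toOmega {Γ : Env} {M : Term} {σ : Ty} (h : Deriv Γ M σ) : Deriv Γ M Ty.omega :=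
  Deriv.andE₂ (h.eqv (SemEq.andOmegaR σ))

lemma Deriv.appNil {M N : Term} {Γ : Env} {σ τ : Ty}
    (h₁ : Deriv [] M (Ty.arr σ τ)) (h₂ : Deriv Γ N σ) : Deriv Γ (Term.app M N) τ :=
  Deriv.arrE h₁ h₂ (envDisj_nil Γ)

lemma Deriv.snoc {Γ : Env} {M N : Term} {y : ℕ} {ρ σ τ : Ty}
    (h₁ : Deriv Γ M (Ty.arr σ τ)) (h₂ : Deriv [(y, ρ)] N σ) (hy : y ∉ Γ.dom) :
    Deriv ((y, ρ) :: Γ) (Term.app M N) τ :=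
  (Deriv.arrE h₁ h₂ (envDisj_single ρ hy)).perm (List.perm_append_singleton _ _)

/-- universal identities at the typing level -/
def UIdTy (t : Term) : Prop := ∀ ρ : Ty, Deriv [] t (Ty.arr ρ ρ)

def idT (z : ℕ) : Term := Term.lam z (Term.var z)

lemma uid_idT (z : ℕ) : UIdTy (idT z) := fun ρ => Deriv.arrI (Deriv.ax z ρ)

@[simp] lemma fv_idT (z : ℕ) : fv (idT z) = ∅ := by simp [idT, fv]

lemma idT_any {z : ℕ} {σ τ : Ty} (h : Deriv [(z, σ)] (Term.var z) τ) :
    Deriv [] (idT z) (Ty.arr σ τ) := Deriv.arrI h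

/-! ### the master η-expansion lemma -/

lemma master (wrap : Term → Term) (WV : Finset ℕ)
    (hwt : ∀ (Γ : Env) (H : Term) (τ : Ty), Deriv Γ H τ → Deriv Γ (wrap H) τ)
    (hws : ∀ (z : ℕ) (N t : Term), z ∉ WV → Term.subst (wrap t) z N = wrap (Term.subst t z N)) :
    ∀ (ys : List ℕ) (Ps : List Term) (τ : Ty) (Γ : Env) (H : Term),
    Ps.length = ys.length → ys.Nodup → (∀ y ∈ ys, y ∉ Γ.dom) →
    (∀ P ∈ Ps, UIdTy P ∧ fv P = ∅) →
    Deriv Γ H τ → Deriv Γ (lamList ys (wrap (appList H (zarg Ps ys)))) τ := by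
  intro ys
  induction ys with
  | nil =>
      intro Ps τ Γ H hlen _ _ _ hH
      rw [List.length_eq_zero_iff.mp hlen]
      exact hwt Γ H τ hH
  | cons y ys ih =>
      intro Ps τ Γ H hlen hnd hfresh hPs hH
      cases Ps with
      | nil => simp at hlen
      | cons P Ps =>
        simp only [List.length_cons, Nat.succ.injEq] at hlen
        simp only [List.nodup_cons] at hnd
        have hPuid : UIdTy P := (hPs P (by simp)).1
        have hPsrest : ∀ Q ∈ Ps, UIdTy Q ∧ fv Q = ∅ := fun Q hQ => hPs Q (by simp [hQ])
        induction τ generalizing Γ H with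
        | atom a =>
            simp only [lamList_cons, zarg_cons, appList_cons]
            refine Deriv.eqv ?_ (SemEq.symm (SemEq.atomFun a))
            refine Deriv.arrI ?_
            have hH' : Deriv ((y, Ty.omega) :: Γ)
                (Term.app H (Term.app P (Term.var y))) (Ty.atom a) :=
              Deriv.snoc (hH.eqv (SemEq.atomFun a))
                (Deriv.appNil (hPuid Ty.omega) ((Deriv.ax y Ty.omega))) (hfresh y (by simp))
            exact ih Ps (Ty.atom a) ((y, Ty.omega) :: Γ) _ hlen hnd.2
              (fun w hw => by
                simp only [Env.dom, List.map_cons, List.mem_cons, not_or]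
                exact ⟨fun h => hnd.1 (h ▸ hw), hfresh w (by simp [hw])⟩)
              hPsrest hH'
        | omega =>
            simp only [lamList_cons, zarg_cons, appList_cons]
            refine Deriv.eqv ?_ (SemEq.symm SemEq.omegaFun)
            refine Deriv.arrI ?_
            have hH' : Deriv ((y, Ty.omega) :: Γ)
                (Term.app H (Term.app P (Term.var y))) Ty.omega :=
              Deriv.snoc (hH.eqv SemEq.omegaFun)
                (Deriv.appNil (hPuid Ty.omega) ((Deriv.ax y Ty.omega))) (hfresh y (by simp))
            exact ih Ps Ty.omega ((y, Ty.omega) :: Γ) _ hlen hnd.2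
              (fun w hw => by
                simp only [Env.dom, List.map_cons, List.mem_cons, not_or]
                exact ⟨fun h => hnd.1 (h ▸ hw), hfresh w (by simp [hw])⟩)
              hPsrest hH'
        | arr σ' τ' ih₁ ih₂ =>
            simp only [lamList_cons, zarg_cons, appList_cons]
            refine Deriv.arrI ?_
            have hH' : Deriv ((y, σ') :: Γ)
                (Term.app H (Term.app P (Term.var y))) τ' :=
              Deriv.snoc hH (Deriv.appNil (hPuid σ') ((Deriv.ax y σ'))) (hfresh y (by simp))
            exact ih Ps τ' ((y, σ') :: Γ) _ hlen hnd.2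
              (fun w hw => by
                simp only [Env.dom, List.map_cons, List.mem_cons, not_or]
                exact ⟨fun h => hnd.1 (h ▸ hw), hfresh w (by simp [hw])⟩)
              hPsrest hH'
        | and τ₁ τ₂ ih₁ ih₂ =>
            exact Deriv.andI (ih₁ Γ H hfresh (hH.andE₁)) (ih₂ Γ H hfresh (hH.andE₂))
        | or τ₁ τ₂ ih₁ ih₂ =>
            set z := freshVar (WV ∪ (y :: ys).toFinset) with hz
            have hzW : z ∉ WV := fun h => freshVar_not_mem _ (Finset.mem_union_left _ h)
            have hzys : z ∉ (y :: ys) := fun h =>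
              freshVar_not_mem _ (Finset.mem_union_right _ (List.mem_toFinset.mpr h))
            have hsub : Term.subst
                (lamList (y :: ys) (wrap (appList (Term.var z) (zarg (P :: Ps) (y :: ys))))) z H
                = lamList (y :: ys) (wrap (appList H (zarg (P :: Ps) (y :: ys)))) := by
              rw [subst_lamList hzys, hws z H _ hzW, subst_appList,
                subst_zarg hzys (fun Q hQ => by
                  rcases List.mem_cons.mp hQ with rfl | hQ
                  · simp [(hPs Q (by simp)).2]
                  · simp [(hPs Q (by simp [hQ])).2]) H,
                show (Term.var z).subst z H = H by simp [Term.subst]]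
            have branch : ∀ τ', (∀ Γ' H', (∀ w ∈ y :: ys, w ∉ Env.dom Γ') → Deriv Γ' H' τ' →
                  Deriv Γ' (lamList (y :: ys) (wrap (appList H' (zarg (P :: Ps) (y :: ys))))) τ') →
                Deriv [(z, Ty.and τ' Ty.omega)]
                  (lamList (y :: ys) (wrap (appList (Term.var z) (zarg (P :: Ps) (y :: ys))))) τ' := by
              intro τ' ihτ
              refine ihτ [(z, Ty.and τ' Ty.omega)] (Term.var z) ?_ ((Deriv.ax _ _).andE₁)
              intro w hw
              simp only [Env.dom, List.map_cons, List.map_nil, List.mem_singleton]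
              rintro rfl
              exact hzys hw
            have horE := Deriv.orE (Γ₁ := []) (Γ₂ := Γ)
              (Deriv.orI₁ (branch τ₁ ih₁)) (Deriv.orI₂ (branch τ₂ ih₂))
              (hH.eqv (SemEq.andOmegaR _)) (envDisj_nil Γ)
            rw [hsub] at horE
            exact horE

/-! ### master corollaries -/

lemma master_id : ∀ (ys : List ℕ) (Ps : List Term) (τ : Ty) (Γ : Env) (H : Term),
    Ps.length = ys.length → ys.Nodup → (∀ y ∈ ys, y ∉ Γ.dom) →
    (∀ P ∈ Ps, UIdTy P ∧ fv P = ∅) →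
    Deriv Γ H τ → Deriv Γ (lamList ys (appList H (zarg Ps ys))) τ :=
  master (fun t => t) ∅ (fun _ _ _ h => h) (fun _ _ _ _ => rfl)

lemma master_post (W : Term) (hW : UIdTy W) (hWc : fv W = ∅) :
    ∀ (ys : List ℕ) (Ps : List Term) (τ : Ty) (Γ : Env) (H : Term),
    Ps.length = ys.length → ys.Nodup → (∀ y ∈ ys, y ∉ Γ.dom) →
    (∀ P ∈ Ps, UIdTy P ∧ fv P = ∅) →
    Deriv Γ H τ → Deriv Γ (lamList ys (Term.app W (appList H (zarg Ps ys)))) τ :=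
  master (fun t => Term.app W t) ∅
    (fun Γ H τ h => Deriv.appNil (hW τ) h)
    (fun z N t _ => by
      show Term.app (W.subst z N) (t.subst z N) = Term.app W (t.subst z N)
      rw [Term.subst_eq_self N (by simp [hWc])])

lemma fhinf_uid {t : Term} (h : FHInf t) : UIdTy t := by
  induction h with
  | mk x ys Ps hlen hx hnd hPs ih =>
      intro ρ
      rw [ofFn_eq_zarg ys Ps hlen]
      refine Deriv.arrI ?_
      exact master_id ys Ps ρ [(x, ρ)] (Term.var x) hlen hnd
        (fun y hy => by
          simp only [Env.dom, List.map_cons, List.map_nil, List.mem_singleton]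
          rintro rfl
          exact hx hy)
        (fun P hP => ⟨ih P hP, fhinf_closed (hPs P hP)⟩)
        (Deriv.ax x ρ)

lemma uid_comp {C₁ C₂ : Term} (x : ℕ) (h₁ : UIdTy C₁) (h₂ : UIdTy C₂) :
    UIdTy (Term.lam x (Term.app C₂ (Term.app C₁ (Term.var x)))) := fun ρ =>
  Deriv.arrI (Deriv.appNil (h₂ ρ) (Deriv.appNil (h₁ ρ) (Deriv.ax x ρ)))

/-! ### ω-like types -/

inductive OmG : Ty → Prop
  | omega : OmG Ty.omega
  | arr (τ : Ty) {σ : Ty} : OmG σ → OmG (Ty.arr τ σ)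
  | and {σ τ : Ty} : OmG σ → OmG τ → OmG (Ty.and σ τ)
  | orL (τ : Ty) {σ : Ty} : OmG σ → OmG (Ty.or σ τ)
  | orR (τ : Ty) {σ : Ty} : OmG σ → OmG (Ty.or τ σ)

lemma omg_of_normLe {σ τ : Ty} (h : NormLe σ τ) : OmG σ → OmG τ := by
  induction h with
  | refl => exact id
  | trans _ _ ih₁ ih₂ => exact fun h => ih₂ (ih₁ h)
  | leOmega => exact fun _ => OmG.omega
  | andE₁ σ τ => intro h; cases h; assumption
  | andE₂ σ τ => intro h; cases h; assumption
  | orI₁ σ τ => exact fun h => OmG.orL τ h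
  | orI₂ σ τ => exact fun h => OmG.orR σ h
  | andI _ _ ih₁ ih₂ => exact fun h => OmG.and (ih₁ h) (ih₂ h)
  | orE _ _ ih₁ ih₂ =>
      intro h
      cases h with
      | orL _ h => exact ih₁ h
      | orR _ h => exact ih₂ h
  | atomArr a σ => intro h; cases h
  | omegaArr σ => exact fun _ => OmG.arr σ OmG.omega
  | arr _ _ ih₁ ih₂ =>
      intro h
      cases h with
      | arr _ h => exact OmG.arr _ (ih₂ h)

def omgDepth : Ty → ℕ
  | Ty.arr _ σ => omgDepth σ + 1
  | Ty.and σ τ => max (omgDepth σ) (omgDepth τ)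
  | Ty.or σ τ => max (omgDepth σ) (omgDepth τ)
  | _ => 0

lemma map_eq_zarg_replicate (P : Term) (ys : List ℕ) :
    ys.map (fun y => Term.app P (Term.var y)) = zarg (List.replicate ys.length P) ys := by
  induction ys with
  | nil => rfl
  | cons y ys ih => simp only [List.map_cons, List.length_cons, List.replicate, zarg_cons, ih]

lemma omega_master (z : ℕ) : ∀ (ys : List ℕ) (σ : Ty), OmG σ →
    omgDepth σ ≤ ys.length →
    ∀ (Γ : Env) (H : Term), ys.Nodup → (∀ y ∈ ys, y ∉ Γ.dom) → Deriv Γ H Ty.omega →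
    Deriv Γ (lamList ys (appList H (ys.map (fun y => Term.app (idT z) (Term.var y))))) σ := by
  intro ys
  induction ys with
  | nil =>
      intro σ h
      induction h with
      | omega => intro _ Γ H _ _ hH; simpa using hH
      | arr τ hσ ih => intro hdep; simp [omgDepth] at hdep
      | and h₁ h₂ ih₁ ih₂ =>
          intro hdep Γ H hnd hfresh hH
          simp only [omgDepth, max_le_iff] at hdep
          exact Deriv.andI (ih₁ hdep.1 Γ H hnd hfresh hH) (ih₂ hdep.2 Γ H hnd hfresh hH)
      | orL τ h ih =>
          intro hdep Γ H hnd hfresh hH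
          simp only [omgDepth, max_le_iff] at hdep
          exact Deriv.orI₁ (ih hdep.1 Γ H hnd hfresh hH)
      | orR τ h ih =>
          intro hdep Γ H hnd hfresh hH
          simp only [omgDepth, max_le_iff] at hdep
          exact Deriv.orI₂ (ih hdep.2 Γ H hnd hfresh hH)
  | cons y ys ih =>
      intro σ h
      induction h with
      | omega =>
          intro _ Γ H hnd hfresh hH
          simp only [List.nodup_cons] at hnd
          simp only [lamList_cons, List.map_cons, appList_cons]
          refine Deriv.eqv (Deriv.arrI ?_) (SemEq.symm SemEq.omegaFun)
          refine ih Ty.omega OmG.omega (by simp [omgDepth]) ((y, Ty.omega) :: Γ) _ hnd.2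
            (fun w hw => by
              simp only [Env.dom, List.map_cons, List.mem_cons, not_or]
              exact ⟨fun h => hnd.1 (h ▸ hw), hfresh w (by simp [hw])⟩) ?_
          exact Deriv.snoc (hH.eqv SemEq.omegaFun)
            (Deriv.appNil (uid_idT z Ty.omega) (Deriv.ax y Ty.omega)) (hfresh y (by simp))
      | arr τ hσ ihσ =>
          rename_i σ'
          intro hdep Γ H hnd hfresh hH
          simp only [List.nodup_cons] at hnd
          simp only [omgDepth, List.length_cons, Nat.add_le_add_iff_right] at hdep
          simp only [lamList_cons, List.map_cons, appList_cons]
          refine Deriv.arrI ?_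
          refine ih σ' hσ hdep ((y, τ) :: Γ) _ hnd.2
            (fun w hw => by
              simp only [Env.dom, List.map_cons, List.mem_cons, not_or]
              exact ⟨fun h => hnd.1 (h ▸ hw), hfresh w (by simp [hw])⟩) ?_
          refine Deriv.snoc (hH.eqv SemEq.omegaFun)
            (Deriv.appNil (idT_any ((Deriv.ax z τ).toOmega)) (Deriv.ax y τ)) (hfresh y (by simp))
      | and h₁ h₂ ih₁ ih₂ =>
          intro hdep Γ H hnd hfresh hH
          simp only [omgDepth, max_le_iff] at hdep
          exact Deriv.andI (ih₁ hdep.1 Γ H hnd hfresh hH) (ih₂ hdep.2 Γ H hnd hfresh hH)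
      | orL τ h ihh =>
          intro hdep Γ H hnd hfresh hH
          simp only [omgDepth, max_le_iff] at hdep
          exact Deriv.orI₁ (ihh hdep.1 Γ H hnd hfresh hH)
      | orR τ h ihh =>
          intro hdep Γ H hnd hfresh hH
          simp only [omgDepth, max_le_iff] at hdep
          exact Deriv.orI₂ (ihh hdep.2 Γ H hnd hfresh hH)

/-- typing of the `n`-ary identity at `σ → ω`. -/
lemma omega_master_rev (z : ℕ) : ∀ (ys : List ℕ),
    ∀ (Γ : Env) (H : Term), ys.Nodup → (∀ y ∈ ys, y ∉ Γ.dom) → Deriv Γ H Ty.omega →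
    Deriv Γ (lamList ys (appList H (ys.map (fun y => Term.app (idT z) (Term.var y))))) Ty.omega :=
  fun ys Γ H hnd hfresh hH =>
    omega_master z ys Ty.omega OmG.omega (by simp [omgDepth]) Γ H hnd hfresh hH

/-! ### witness packages -/

/-- A "package": a term `C` that is β-convertible to an FHInf `N`, closed,
with all variables avoiding `V`, and a universal identity for typing. -/
def Pack (C N : Term) (V : Finset ℕ) : Prop :=
  BetaConv C N ∧ FHInf N ∧ fv C = ∅ ∧ Disjoint (Term.vset C ∪ Term.vset N) V ∧ UIdTy C

def Wit (σ τ : Ty) (V : Finset ℕ) : Prop :=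
  ∃ C N : Term, Pack C N V ∧ Deriv [] C (Ty.arr σ τ) ∧ Deriv [] C (Ty.arr τ σ)

def SIso (σ τ : Ty) : Prop := ∀ V : Finset ℕ, Wit σ τ V

lemma SIso.strongIso {σ τ : Ty} (h : SIso σ τ) : StrongIso σ τ := by
  obtain ⟨C, N, ⟨hconv, hN, _, _, _⟩, h1, h2⟩ := h ∅
  exact ⟨C, ⟨N, hconv, hN⟩, h1, h2⟩

lemma pack_idT {V : Finset ℕ} : Pack (idT (freshVar V)) (idT (freshVar V)) V := by
  refine ⟨BetaConv.rfl, fhinf_id _, by simp, ?_, uid_idT _⟩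
  rw [Finset.disjoint_left]
  intro a ha hav
  have ha' : a ∈ Term.vset (idT (freshVar V)) := by
    simp only [Finset.mem_union] at ha; tauto
  simp only [idT, Term.vset, Finset.mem_insert, Finset.mem_singleton] at ha'
  rcases ha' with rfl | rfl <;> exact freshVar_not_mem V hav

lemma pack_self {C : Term} {V : Finset ℕ} (hC : FHInf C)
    (hdisj : Disjoint (Term.vset C) V) : Pack C C V :=
  ⟨BetaConv.rfl, hC, fhinf_closed hC, by simpa using hdisj, fhinf_uid hC⟩

lemma pack_comp {C₁ N₁ C₂ N₂ : Term} {V : Finset ℕ} (x : ℕ) (hx : x ∉ V)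
    (h₁ : Pack C₁ N₁ (V ∪ {x} ∪ Term.vset C₂ ∪ Term.vset N₂))
    (h₂ : Pack C₂ N₂ (V ∪ {x})) :
    ∃ R, Pack (Term.lam x (Term.app C₂ (Term.app C₁ (Term.var x)))) R V := by
  obtain ⟨hc₁, hf₁, hfv₁, hd₁, hu₁⟩ := h₁
  obtain ⟨hc₂, hf₂, hfv₂, hd₂, hu₂⟩ := h₂
  have hN₁d : ∀ a ∈ Term.vset N₁, a ∉ V ∪ {x} ∪ Term.vset C₂ ∪ Term.vset N₂ := by
    intro a ha
    exact Finset.disjoint_left.mp hd₁ (Finset.mem_union_right _ ha)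
  have hC₁d : ∀ a ∈ Term.vset C₁, a ∉ V ∪ {x} ∪ Term.vset C₂ ∪ Term.vset N₂ := by
    intro a ha
    exact Finset.disjoint_left.mp hd₁ (Finset.mem_union_left _ ha)
  have hN₂d : ∀ a ∈ Term.vset N₂, a ∉ V ∪ {x} := by
    intro a ha
    exact Finset.disjoint_left.mp hd₂ (Finset.mem_union_right _ ha)
  have hC₂d : ∀ a ∈ Term.vset C₂, a ∉ V ∪ {x} := by
    intro a ha
    exact Finset.disjoint_left.mp hd₂ (Finset.mem_union_left _ ha)
  have hdisjN : Disjoint (Term.vset N₁) (Term.vset N₂) := by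
    rw [Finset.disjoint_left]
    intro a ha ha'
    exact hN₁d a ha (by simp [ha'])
  have hx₁ : x ∉ Term.vset N₁ := fun h => hN₁d x h (by simp)
  have hx₂ : x ∉ Term.vset N₂ := fun h => hN₂d x h (by simp)
  obtain ⟨R, hRf, hRconv, hRv⟩ := comp_fhinf (Term.size N₁ + Term.size N₂) N₁ N₂ x
    le_rfl hf₁ hf₂ hdisjN hx₁ hx₂
  refine ⟨R, ?_, hRf, ?_, ?_, uid_comp x hu₁ hu₂⟩
  · exact (BetaConv.lam x (BetaConv.app_congr hc₂ (BetaConv.appL _ hc₁))).trans' hRconv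
  · rw [show fv (Term.lam x (Term.app C₂ (Term.app C₁ (Term.var x))))
        = (fv C₂ ∪ (fv C₁ ∪ {x})) \ {x} from rfl, hfv₁, hfv₂]
    simp
  · rw [Finset.disjoint_left]
    intro a ha hav
    simp only [Finset.mem_union] at ha
    rcases ha with ha | ha
    · rw [show Term.vset (Term.lam x (Term.app C₂ (Term.app C₁ (Term.var x))))
          = insert x (Term.vset C₂ ∪ (Term.vset C₁ ∪ {x})) from rfl] at ha
      simp only [Finset.mem_insert, Finset.mem_union, Finset.mem_singleton] at ha
      rcases ha with rfl | ha | ha | rfl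
      · exact hx hav
      · exact hC₂d a ha (by simp [hav])
      · exact hC₁d a ha (by simp [hav])
      · exact hx hav
    · have := hRv ha
      simp only [Finset.mem_insert, Finset.mem_union] at this
      rcases this with rfl | h | h
      · exact hx hav
      · exact hN₁d a h (by simp [hav])
      · exact hN₂d a h (by simp [hav])

lemma pack_eta {C₀ N₀ : Term} {V : Finset ℕ} (x : ℕ) (hx : x ∉ V)
    (h₀ : Pack C₀ N₀ (V ∪ {x})) :
    ∃ R, Pack (Term.lam x (Term.app C₀ (Term.var x))) R V := by
  obtain ⟨hc, hf, hfv, hd, hu⟩ := h₀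
  obtain ⟨u, us, Ps, hlen, hus, hnd, hPs, hN⟩ := hf.elim'
  have hN₀d : ∀ a ∈ Term.vset N₀, a ∉ V ∪ {x} := fun a ha =>
    Finset.disjoint_left.mp hd (Finset.mem_union_right _ ha)
  have hC₀d : ∀ a ∈ Term.vset C₀, a ∉ V ∪ {x} := fun a ha =>
    Finset.disjoint_left.mp hd (Finset.mem_union_left _ ha)
  have hxus : x ∉ us := by
    intro h
    refine hN₀d x ?_ (by simp)
    rw [hN]
    exact ys_subset_vset (List.mem_toFinset.mpr h)
  have hPc : ∀ P ∈ Ps, fv P = ∅ := fun P hP => fhinf_closed (hPs P hP)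
  refine ⟨Term.lam x (lamList us (appList (Term.var x) (zarg Ps us))), ?_,
    FHInf.mk' x us Ps hlen hxus hnd hPs, ?_, ?_, fun ρ => Deriv.arrI (Deriv.appNil (hu ρ) (Deriv.ax x ρ))⟩
  · refine (BetaConv.lam x ((BetaConv.appL _ hc).trans' ?_))
    rw [hN]
    exact BetaConv.of_beta (headBeta u us Ps (Term.var x) hus hPc)
  · rw [show fv (Term.lam x (Term.app C₀ (Term.var x))) = (fv C₀ ∪ {x}) \ {x} from rfl, hfv]
    simp
  · rw [Finset.disjoint_left]
    intro a ha hav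
    simp only [Finset.mem_union] at ha
    rcases ha with ha | ha
    · rw [show Term.vset (Term.lam x (Term.app C₀ (Term.var x)))
          = insert x (Term.vset C₀ ∪ {x}) from rfl] at ha
      simp only [Finset.mem_insert, Finset.mem_union, Finset.mem_singleton] at ha
      rcases ha with rfl | ha | rfl
      · exact hx hav
      · exact hC₀d a ha (by simp [hav])
      · exact hx hav
    · rw [show Term.vset (Term.lam x (lamList us (appList (Term.var x) (zarg Ps us))))
          = insert x (Term.vset (lamList us (appList (Term.var x) (zarg Ps us)))) from rfl] at ha
      simp only [Finset.mem_insert] at ha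
      rcases ha with rfl | ha
      · exact hx hav
      · rw [vset_lamList, vset_appList] at ha
        simp only [Finset.mem_union] at ha
        rcases ha with ha | ha | ha
        · refine hN₀d a ?_ (by simp [hav])
          rw [hN]
          exact ys_subset_vset ha
        · simp only [Term.vset, Finset.mem_singleton] at ha
          exact hx (ha ▸ hav)
        · refine hN₀d a ?_ (by simp [hav])
          rw [hN]
          rw [show Term.vset (Term.lam u (lamList us (appList (Term.var u) (zarg Ps us))))
              = insert u (Term.vset (lamList us (appList (Term.var u) (zarg Ps us)))) from rfl,
            vset_lamList, vset_appList]
          simp only [Finset.mem_insert, Finset.mem_union]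
          tauto

/-! ### more packages: congruence shapes -/

lemma pack_fn1 {C₀ N₀ : Term} {V : Finset ℕ} (f y : ℕ) (hfy : f ≠ y)
    (hf : f ∉ V) (hy : y ∉ V) (h₀ : Pack C₀ N₀ (V ∪ {f, y})) :
    Pack (Term.lam f (Term.lam y (Term.app (Term.var f) (Term.app C₀ (Term.var y)))))
      (Term.lam f (Term.lam y (Term.app (Term.var f) (Term.app N₀ (Term.var y))))) V := by
  obtain ⟨hc, hf₀, hfv, hd, hu⟩ := h₀
  have hC₀d : ∀ a ∈ Term.vset C₀, a ∉ V ∪ {f, y} := fun a ha =>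
    Finset.disjoint_left.mp hd (Finset.mem_union_left _ ha)
  have hN₀d : ∀ a ∈ Term.vset N₀, a ∉ V ∪ {f, y} := fun a ha =>
    Finset.disjoint_left.mp hd (Finset.mem_union_right _ ha)
  refine ⟨?_, ?_, ?_, ?_, ?_⟩
  · exact BetaConv.lam f (BetaConv.lam y (BetaConv.appR _ (BetaConv.appL _ hc)))
  · have := FHInf.mk' f [y] [N₀] rfl (by simp [hfy]) (by simp) (by simpa using hf₀)
    simpa using this
  · rw [show fv (Term.lam f (Term.lam y (Term.app (Term.var f) (Term.app C₀ (Term.var y)))))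
        = (({f} ∪ (fv C₀ ∪ {y})) \ {y}) \ {f} from rfl, hfv]
    ext a
    simp only [Finset.mem_sdiff, Finset.mem_union, Finset.mem_singleton,
      Finset.notMem_empty, iff_false, Finset.empty_union]
    tauto
  · rw [Finset.disjoint_left]
    intro a ha hav
    have key : ∀ X : Term, a ∈ Term.vset
          (Term.lam f (Term.lam y (Term.app (Term.var f) (Term.app X (Term.var y))))) →
        a = f ∨ a = y ∨ a ∈ Term.vset X := by
      intro X hX
      rw [show Term.vset (Term.lam f (Term.lam y (Term.app (Term.var f) (Term.app X (Term.var y)))))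
          = insert f (insert y ({f} ∪ (Term.vset X ∪ {y}))) from rfl] at hX
      simp only [Finset.mem_insert, Finset.mem_union, Finset.mem_singleton] at hX
      tauto
    simp only [Finset.mem_union] at ha
    rcases ha with ha | ha
    · rcases key C₀ ha with rfl | rfl | h
      · exact hf hav
      · exact hy hav
      · exact hC₀d a h (by simp [hav])
    · rcases key N₀ ha with rfl | rfl | h
      · exact hf hav
      · exact hy hav
      · exact hN₀d a h (by simp [hav])
  · intro ρ
    refine Deriv.arrI ?_
    have := master_id [y] [C₀] ρ [(f, ρ)] (Term.var f) rfl (by simp)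
      (by simp [Env.dom, Ne.symm hfy]) (fun P hP => by
        rcases List.mem_singleton.mp hP with rfl
        exact ⟨hu, hfv⟩) (Deriv.ax f ρ)
    simpa using this

lemma pack_wrap {W NW P NP : Term} {V : Finset ℕ} (x y : ℕ) (hxy : x ≠ y)
    (hx : x ∉ V) (hy : y ∉ V)
    (hW : Pack W NW (V ∪ {x, y})) (hP : Pack P NP (V ∪ {x, y})) :
    ∃ R, Pack (Term.lam x (Term.lam y (Term.app W
        (Term.app (Term.var x) (Term.app P (Term.var y)))))) R V := by
  obtain ⟨hcW, hfW, hfvW, hdW, huW⟩ := hW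
  obtain ⟨hcP, hfP, hfvP, hdP, huP⟩ := hP
  obtain ⟨u, vs, Qs, hlen, hu, hnd, hQs, hNW⟩ := hfW.elim'
  have hNWd : ∀ a ∈ Term.vset NW, a ∉ V ∪ {x, y} := fun a ha =>
    Finset.disjoint_left.mp hdW (Finset.mem_union_right _ ha)
  have hWd : ∀ a ∈ Term.vset W, a ∉ V ∪ {x, y} := fun a ha =>
    Finset.disjoint_left.mp hdW (Finset.mem_union_left _ ha)
  have hNPd : ∀ a ∈ Term.vset NP, a ∉ V ∪ {x, y} := fun a ha =>
    Finset.disjoint_left.mp hdP (Finset.mem_union_right _ ha)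
  have hPd : ∀ a ∈ Term.vset P, a ∉ V ∪ {x, y} := fun a ha =>
    Finset.disjoint_left.mp hdP (Finset.mem_union_left _ ha)
  have hvs_NW : ∀ w ∈ vs, w ∈ Term.vset NW := fun w hw => by
    rw [hNW]; exact ys_subset_vset (List.mem_toFinset.mpr hw)
  have hxvs : x ∉ vs := fun h => hNWd x (hvs_NW x h) (by simp)
  have hyvs : y ∉ vs := fun h => hNWd y (hvs_NW y h) (by simp)
  have hQc : ∀ Q ∈ Qs, fv Q = ∅ := fun Q hQ => fhinf_closed (hQs Q hQ)
  refine ⟨Term.lam x (lamList (y :: vs)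
      (appList (Term.var x) (zarg (NP :: Qs) (y :: vs)))), ?_,
    FHInf.mk' x (y :: vs) (NP :: Qs) (by simp [hlen]) (by simp [hxy, hxvs])
      (by simp [hnd, hyvs]) (fun Q hQ => by
        rcases List.mem_cons.mp hQ with rfl | hQ
        · exact hfP
        · exact hQs Q hQ), ?_, ?_, ?_⟩
  · refine (BetaConv.lam x (BetaConv.lam y
      (BetaConv.app_congr hcW (BetaConv.appR _ (BetaConv.appL _ hcP))))).trans' ?_
    refine BetaConv.lam x ?_
    simp only [lamList_cons, zarg_cons, appList_cons]
    refine BetaConv.lam y ?_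
    rw [hNW]
    exact BetaConv.of_beta (headBeta u vs Qs
      (Term.app (Term.var x) (Term.app NP (Term.var y))) hu hQc)
  · rw [show fv (Term.lam x (Term.lam y (Term.app W
        (Term.app (Term.var x) (Term.app P (Term.var y))))))
        = ((fv W ∪ ({x} ∪ (fv P ∪ {y}))) \ {y}) \ {x} from rfl, hfvW, hfvP]
    ext a
    simp only [Finset.mem_sdiff, Finset.mem_union, Finset.mem_singleton,
      Finset.notMem_empty, iff_false, Finset.empty_union]
    tauto
  · rw [Finset.disjoint_left]
    intro a ha hav
    simp only [Finset.mem_union] at ha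
    rcases ha with ha | ha
    · rw [show Term.vset (Term.lam x (Term.lam y (Term.app W
          (Term.app (Term.var x) (Term.app P (Term.var y))))))
          = insert x (insert y (Term.vset W ∪ ({x} ∪ (Term.vset P ∪ {y})))) from rfl] at ha
      simp only [Finset.mem_insert, Finset.mem_union, Finset.mem_singleton] at ha
      rcases ha with rfl | rfl | ha | rfl | ha | rfl
      · exact hx hav
      · exact hy hav
      · exact hWd a ha (by simp [hav])
      · exact hx hav
      · exact hPd a ha (by simp [hav])
      · exact hy hav
    · rw [show Term.vset (Term.lam x (lamList (y :: vs)
          (appList (Term.var x) (zarg (NP :: Qs) (y :: vs)))))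
          = insert x (Term.vset (lamList (y :: vs)
            (appList (Term.var x) (zarg (NP :: Qs) (y :: vs))))) from rfl,
        vset_lamList, vset_appList] at ha
      simp only [Finset.mem_insert, Finset.mem_union, List.mem_toFinset, List.mem_cons] at ha
      rcases ha with rfl | ha | ha | ha
      · exact hx hav
      · rcases ha with rfl | ha
        · exact hy hav
        · exact hNWd a (hvs_NW a ha) (by simp [hav])
      · simp only [Term.vset, Finset.mem_singleton] at ha
        exact hx (ha ▸ hav)
      · have hsub : (zarg (NP :: Qs) (y :: vs)).foldr (fun b s => Term.vset b ∪ s) ∅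
            ⊆ Term.vset NP ∪ Term.vset NW ∪ {y} := by
          apply foldr_vset_zarg_subset
          · intro Q hQ
            rcases List.mem_cons.mp hQ with rfl | hQ
            · intro b hb; simp only [Finset.mem_union]; tauto
            · intro b hb
              simp only [Finset.mem_union]
              have : b ∈ Term.vset NW := by
                rw [hNW]
                exact vset_fhinf_arg hlen hQ hb
              tauto
          · intro w hw
            rcases List.mem_cons.mp hw with rfl | hw
            · simp
            · simp only [Finset.mem_union]
              exact Or.inl (Or.inr (hvs_NW w hw))
        have := hsub ha
        simp only [Finset.mem_union, Finset.mem_singleton] at this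
        rcases this with (h | h) | rfl
        · exact hNPd a h (by simp [hav])
        · exact hNWd a h (by simp [hav])
        · exact hy hav
  · intro ρ
    refine Deriv.arrI ?_
    have := master_post W huW hfvW [y] [P] ρ [(x, ρ)] (Term.var x) rfl (by simp)
      (by simp [Env.dom, Ne.symm hxy]) (fun Q hQ => by
        rcases List.mem_singleton.mp hQ with rfl
        exact ⟨huP, hfvP⟩) (Deriv.ax x ρ)
    simpa using this

/-! ### coercions from the normalisation preorder -/

lemma subst_var_eq (z : ℕ) (N : Term) : (Term.var z).subst z N = N := by
  simp [Term.subst]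

/-- Package accessors. -/
lemma Pack.uid {C N : Term} {V : Finset ℕ} (h : Pack C N V) : UIdTy C := h.2.2.2.2

/-- A coercion witness for `σ ≤ τ`. -/
def Coe (σ τ : Ty) : Prop := ∀ V : Finset ℕ,
  ∃ C N : Term, Pack C N V ∧ Deriv [] C (Ty.arr σ τ)

lemma coe_comp_package {σ₁ τ₁ σ₂ τ₂ : Ty} (h₁ : Coe σ₁ τ₁) (h₂ : Coe σ₂ τ₂) (V : Finset ℕ) :
    ∃ (C₁ C₂ R : Term) (x : ℕ),
      Pack (Term.lam x (Term.app C₂ (Term.app C₁ (Term.var x)))) R V ∧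
      UIdTy C₁ ∧ UIdTy C₂ ∧ Deriv [] C₁ (Ty.arr σ₁ τ₁) ∧ Deriv [] C₂ (Ty.arr σ₂ τ₂) := by
  set x := freshVar V with hxdef
  obtain ⟨C₂, N₂, hp₂, ht₂⟩ := h₂ (V ∪ {x})
  obtain ⟨C₁, N₁, hp₁, ht₁⟩ := h₁ (V ∪ {x} ∪ Term.vset C₂ ∪ Term.vset N₂)
  obtain ⟨R, hpR⟩ := pack_comp x (freshVar_not_mem V) hp₁ hp₂
  exact ⟨C₁, C₂, R, x, hpR, hp₁.uid, hp₂.uid, ht₁, ht₂⟩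

lemma coe_of_idT {σ τ : Ty} (h : ∀ z : ℕ, Deriv [(z, σ)] (Term.var z) τ) : Coe σ τ :=
  fun V => ⟨idT (freshVar V), idT (freshVar V), pack_idT, Deriv.arrI (h _)⟩

lemma coe_of_normLe {σ τ : Ty} (h : NormLe σ τ) : Coe σ τ := by
  induction h with
  | refl σ => exact coe_of_idT (fun z => Deriv.ax z σ)
  | @trans σ τ ρ h₁ h₂ ih₁ ih₂ =>
      intro V
      obtain ⟨C₁, C₂, R, x, hpR, hu₁, hu₂, ht₁, ht₂⟩ := coe_comp_package ih₁ ih₂ V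
      exact ⟨_, R, hpR, Deriv.arrI (Deriv.appNil ht₂ (Deriv.appNil ht₁ (Deriv.ax x σ)))⟩
  | leOmega σ => exact coe_of_idT (fun z => (Deriv.ax z σ).toOmega)
  | andE₁ σ τ => exact coe_of_idT (fun z => (Deriv.ax z (Ty.and σ τ)).andE₁)
  | andE₂ σ τ => exact coe_of_idT (fun z => (Deriv.ax z (Ty.and σ τ)).andE₂)
  | orI₁ σ τ => exact coe_of_idT (fun z => (Deriv.ax z σ).orI₁)
  | orI₂ σ τ => exact coe_of_idT (fun z => (Deriv.ax z τ).orI₂)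
  | @andI σ τ ρ h₁ h₂ ih₁ ih₂ =>
      intro V
      obtain ⟨C₁, C₂, R, x, hpR, hu₁, hu₂, ht₁, ht₂⟩ := coe_comp_package ih₁ ih₂ V
      refine ⟨_, R, hpR, Deriv.arrI (Deriv.andI ?_ ?_)⟩
      · exact Deriv.appNil (hu₂ τ) (Deriv.appNil ht₁ (Deriv.ax x σ))
      · exact Deriv.appNil ht₂ (Deriv.appNil (hu₁ σ) (Deriv.ax x σ))
  | @orE σ τ ρ h₁ h₂ ih₁ ih₂ =>
      -- σ ≤ τ, ρ ≤ τ ⊢ σ ∨ ρ ≤ τ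
      intro V
      obtain ⟨C₁, C₂, R, x, hpR, hu₁, hu₂, ht₁, ht₂⟩ := coe_comp_package ih₁ ih₂ V
      refine ⟨_, R, hpR, Deriv.arrI ?_⟩
      have b1 : Deriv [(x, Ty.and σ Ty.omega)]
          (Term.app C₂ (Term.app C₁ (Term.var x))) τ :=
        Deriv.appNil (hu₂ τ) (Deriv.appNil ht₁ ((Deriv.ax x _).andE₁))
      have b2 : Deriv [(x, Ty.and ρ Ty.omega)]
          (Term.app C₂ (Term.app C₁ (Term.var x))) τ :=
        Deriv.appNil ht₂ (Deriv.appNil (hu₁ ρ) ((Deriv.ax x _).andE₁))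
      have horE := Deriv.orE (Γ₁ := []) b1 b2
        ((Deriv.ax x (Ty.or σ ρ)).eqv (SemEq.andOmegaR _)) (envDisj_nil _)
      rw [show (Term.app C₂ (Term.app C₁ (Term.var x))).subst x (Term.var x)
          = Term.app C₂ (Term.app C₁ (Term.var x)) from subst_var_self _ _] at horE
      exact horE
  | atomArr a σ =>
      intro V
      set f := freshVar V with hf
      set y := freshVar (V ∪ {f}) with hy
      have hfy : f ≠ y := by
        intro h
        apply freshVar_not_mem (V ∪ {f})
        rw [← hy, ← h]
        simp
      have hpack := pack_fn1 (C₀ := idT (freshVar (V ∪ {f, y})))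
        (N₀ := idT (freshVar (V ∪ {f, y}))) f y hfy (freshVar_not_mem V)
        (fun h => freshVar_not_mem (V ∪ {f}) (Finset.mem_union_left _ h))
        pack_idT
      refine ⟨_, _, hpack, Deriv.arrI (Deriv.arrI ?_)⟩
      refine Deriv.snoc ((Deriv.ax f (Ty.atom a)).eqv (SemEq.atomFun a)) ?_
        (by simp only [Env.dom, List.map_cons, List.map_nil, List.mem_singleton]; exact Ne.symm hfy)
      exact Deriv.appNil (idT_any ((Deriv.ax _ σ).toOmega)) (Deriv.ax y σ)
  | omegaArr σ =>
      intro V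
      set f := freshVar V with hf
      set y := freshVar (V ∪ {f}) with hy
      have hfy : f ≠ y := by
        intro h
        apply freshVar_not_mem (V ∪ {f})
        rw [← hy, ← h]
        simp
      have hpack := pack_fn1 (C₀ := idT (freshVar (V ∪ {f, y})))
        (N₀ := idT (freshVar (V ∪ {f, y}))) f y hfy (freshVar_not_mem V)
        (fun h => freshVar_not_mem (V ∪ {f}) (Finset.mem_union_left _ h))
        pack_idT
      refine ⟨_, _, hpack, Deriv.arrI (Deriv.arrI ?_)⟩
      refine Deriv.snoc ((Deriv.ax f Ty.omega).eqv SemEq.omegaFun) ?_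
        (by simp only [Env.dom, List.map_cons, List.map_nil, List.mem_singleton]; exact Ne.symm hfy)
      exact Deriv.appNil (idT_any ((Deriv.ax _ σ).toOmega)) (Deriv.ax y σ)
  | @arr σ σ' τ τ' h₁ h₂ ih₁ ih₂ =>
      -- σ' ≤ σ, τ ≤ τ' ⊢ σ → τ ≤ σ' → τ'
      intro V
      set x := freshVar V with hx
      set y := freshVar (V ∪ {x}) with hy
      have hxy : x ≠ y := by
        intro h
        apply freshVar_not_mem (V ∪ {x})
        rw [← hy, ← h]
        simp
      obtain ⟨C₂, N₂, hp₂, ht₂⟩ := ih₂ (V ∪ {x, y})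
      obtain ⟨C₁, N₁, hp₁, ht₁⟩ := ih₁ (V ∪ {x, y})
      obtain ⟨R, hpR⟩ := pack_wrap x y hxy (freshVar_not_mem V)
        (fun h => freshVar_not_mem (V ∪ {x}) (Finset.mem_union_left _ h)) hp₂ hp₁
      refine ⟨_, R, hpR, Deriv.arrI (Deriv.arrI ?_)⟩
      refine Deriv.appNil ht₂ ?_
      refine Deriv.snoc (Deriv.ax x (Ty.arr σ τ)) ?_
        (by simp only [Env.dom, List.map_cons, List.map_nil, List.mem_singleton]; exact Ne.symm hxy)
      exact Deriv.appNil ht₁ (Deriv.ax y σ')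

/-! ### SIso: basic algebra and congruences -/

lemma sIso_refl (σ : Ty) : SIso σ σ :=
  fun V => ⟨idT (freshVar V), idT (freshVar V), pack_idT, uid_idT _ σ, uid_idT _ σ⟩

lemma SIso.symm {σ τ : Ty} (h : SIso σ τ) : SIso τ σ := by
  intro V
  obtain ⟨C, N, hp, h1, h2⟩ := h V
  exact ⟨C, N, hp, h2, h1⟩

lemma SIso.trans {σ τ ρ : Ty} (h₁ : SIso σ τ) (h₂ : SIso τ ρ) : SIso σ ρ := by
  intro V
  set x := freshVar V with hx
  obtain ⟨C₃, N₃, hp₃, ht₃, ht₃'⟩ := h₁ (V ∪ {x})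
  set V₀ := V ∪ {x} ∪ Term.vset C₃ ∪ Term.vset N₃ with hV₀
  set x₁ := freshVar V₀ with hx₁
  obtain ⟨C₂, N₂, hp₂, ht₂, ht₂'⟩ := h₂ (V₀ ∪ {x₁})
  obtain ⟨C₁, N₁, hp₁, ht₁, ht₁'⟩ := h₁ (V₀ ∪ {x₁} ∪ Term.vset C₂ ∪ Term.vset N₂)
  obtain ⟨RE, hpE⟩ := pack_comp x₁ (freshVar_not_mem V₀) hp₁ hp₂
  obtain ⟨RD, hpD⟩ := pack_comp x (freshVar_not_mem V) hpE hp₃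
  refine ⟨_, RD, hpD, ?_, ?_⟩
  · refine Deriv.arrI (Deriv.appNil (hp₃.uid ρ) (Deriv.appNil ?_ (Deriv.ax x σ)))
    exact Deriv.arrI (Deriv.appNil ht₂ (Deriv.appNil ht₁ (Deriv.ax x₁ σ)))
  · refine Deriv.arrI (Deriv.appNil ht₃' (Deriv.appNil ?_ (Deriv.ax x ρ)))
    exact Deriv.arrI (Deriv.appNil ht₂' (Deriv.appNil (hp₁.uid ρ) (Deriv.ax x₁ ρ)))

/-- two fresh distinct variables -/
lemma two_fresh (V : Finset ℕ) :
    ∃ f y : ℕ, f ≠ y ∧ f ∉ V ∧ y ∉ V := by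
  refine ⟨freshVar V, freshVar (V ∪ {freshVar V}), ?_, freshVar_not_mem V, ?_⟩
  · intro h
    apply freshVar_not_mem (V ∪ {freshVar V})
    rw [← h]
    simp
  · intro h
    exact freshVar_not_mem (V ∪ {freshVar V}) (Finset.mem_union_left _ h)

lemma sIso_arrL {σ τ : Ty} (ρ : Ty) (h : SIso σ τ) : SIso (Ty.arr σ ρ) (Ty.arr τ ρ) := by
  intro V
  obtain ⟨f, y, hfy, hf, hy⟩ := two_fresh V
  obtain ⟨C₀, N₀, hp₀, ht, ht'⟩ := h (V ∪ {f, y})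
  have hpk := pack_fn1 f y hfy hf hy hp₀
  have hdom : ∀ Θ : Ty, y ∉ Env.dom [(f, Θ)] := by
    intro Θ
    simp only [Env.dom, List.map_cons, List.map_nil, List.mem_singleton]
    exact Ne.symm hfy
  refine ⟨_, _, hpk, ?_, ?_⟩
  · exact Deriv.arrI (Deriv.arrI
      (Deriv.snoc (Deriv.ax f (Ty.arr σ ρ)) (Deriv.appNil ht' (Deriv.ax y τ)) (hdom _)))
  · exact Deriv.arrI (Deriv.arrI
      (Deriv.snoc (Deriv.ax f (Ty.arr τ ρ)) (Deriv.appNil ht (Deriv.ax y σ)) (hdom _)))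

lemma sIso_arrR {τ τ' : Ty} (σ : Ty) (h : SIso τ τ') : SIso (Ty.arr σ τ) (Ty.arr σ τ') := by
  intro V
  obtain ⟨x, y, hxy, hx, hy⟩ := two_fresh V
  obtain ⟨C₀, N₀, hp₀, ht, ht'⟩ := h (V ∪ {x, y})
  obtain ⟨R, hpR⟩ := pack_wrap x y hxy hx hy hp₀
    (pack_idT (V := V ∪ {x, y}))
  have hdom : ∀ Θ : Ty, y ∉ Env.dom [(x, Θ)] := by
    intro Θ
    simp only [Env.dom, List.map_cons, List.map_nil, List.mem_singleton]
    exact Ne.symm hxy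
  refine ⟨_, R, hpR, ?_, ?_⟩
  · exact Deriv.arrI (Deriv.arrI (Deriv.appNil ht
      (Deriv.snoc (Deriv.ax x (Ty.arr σ τ))
        (Deriv.appNil (uid_idT _ σ) (Deriv.ax y σ)) (hdom _))))
  · exact Deriv.arrI (Deriv.arrI (Deriv.appNil ht'
      (Deriv.snoc (Deriv.ax x (Ty.arr σ τ'))
        (Deriv.appNil (uid_idT _ σ) (Deriv.ax y σ)) (hdom _))))

lemma sIso_andL {σ τ : Ty} (ρ : Ty) (h : SIso σ τ) : SIso (Ty.and σ ρ) (Ty.and τ ρ) := by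
  intro V
  obtain ⟨C₀, N₀, hp₀, ht, ht'⟩ := h (V ∪ {freshVar V})
  obtain ⟨R, hpR⟩ := pack_eta (freshVar V) (freshVar_not_mem V) hp₀
  refine ⟨_, R, hpR, ?_, ?_⟩
  · exact Deriv.arrI (Deriv.andI
      (Deriv.appNil ht ((Deriv.ax _ _).andE₁))
      (Deriv.appNil (hp₀.uid ρ) ((Deriv.ax _ _).andE₂)))
  · exact Deriv.arrI (Deriv.andI
      (Deriv.appNil ht' ((Deriv.ax _ _).andE₁))
      (Deriv.appNil (hp₀.uid ρ) ((Deriv.ax _ _).andE₂)))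

lemma sIso_andR {σ τ : Ty} (ρ : Ty) (h : SIso σ τ) : SIso (Ty.and ρ σ) (Ty.and ρ τ) := by
  intro V
  obtain ⟨C₀, N₀, hp₀, ht, ht'⟩ := h (V ∪ {freshVar V})
  obtain ⟨R, hpR⟩ := pack_eta (freshVar V) (freshVar_not_mem V) hp₀
  refine ⟨_, R, hpR, ?_, ?_⟩
  · exact Deriv.arrI (Deriv.andI
      (Deriv.appNil (hp₀.uid ρ) ((Deriv.ax _ _).andE₁))
      (Deriv.appNil ht ((Deriv.ax _ _).andE₂)))
  · exact Deriv.arrI (Deriv.andI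
      (Deriv.appNil (hp₀.uid ρ) ((Deriv.ax _ _).andE₁))
      (Deriv.appNil ht' ((Deriv.ax _ _).andE₂)))

lemma sIso_orL {σ τ : Ty} (ρ : Ty) (h : SIso σ τ) : SIso (Ty.or σ ρ) (Ty.or τ ρ) := by
  intro V
  obtain ⟨C₀, N₀, hp₀, ht, ht'⟩ := h (V ∪ {freshVar V})
  obtain ⟨R, hpR⟩ := pack_eta (freshVar V) (freshVar_not_mem V) hp₀
  set x := freshVar V
  have mk : ∀ (α β γ : Ty), Deriv [] C₀ (Ty.arr α γ) →
      Deriv [(x, Ty.or α β)] (Term.app C₀ (Term.var x)) (Ty.or γ ρ) →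
      True := fun _ _ _ _ _ => trivial
  refine ⟨_, R, hpR, ?_, ?_⟩
  · refine Deriv.arrI ?_
    have horE := Deriv.orE (Γ₁ := [])
      (Deriv.orI₁ (Deriv.appNil ht ((Deriv.ax x (Ty.and σ Ty.omega)).andE₁)))
      (Deriv.orI₂ (Deriv.appNil (hp₀.uid ρ) ((Deriv.ax x (Ty.and ρ Ty.omega)).andE₁)))
      ((Deriv.ax x (Ty.or σ ρ)).eqv (SemEq.andOmegaR _)) (envDisj_nil _)
    rwa [subst_var_self] at horE
  · refine Deriv.arrI ?_
    have horE := Deriv.orE (Γ₁ := [])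
      (Deriv.orI₁ (Deriv.appNil ht' ((Deriv.ax x (Ty.and τ Ty.omega)).andE₁)))
      (Deriv.orI₂ (Deriv.appNil (hp₀.uid ρ) ((Deriv.ax x (Ty.and ρ Ty.omega)).andE₁)))
      ((Deriv.ax x (Ty.or τ ρ)).eqv (SemEq.andOmegaR _)) (envDisj_nil _)
    rwa [subst_var_self] at horE

lemma sIso_orR {σ τ : Ty} (ρ : Ty) (h : SIso σ τ) : SIso (Ty.or ρ σ) (Ty.or ρ τ) := by
  intro V
  obtain ⟨C₀, N₀, hp₀, ht, ht'⟩ := h (V ∪ {freshVar V})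
  obtain ⟨R, hpR⟩ := pack_eta (freshVar V) (freshVar_not_mem V) hp₀
  set x := freshVar V
  refine ⟨_, R, hpR, ?_, ?_⟩
  · refine Deriv.arrI ?_
    have horE := Deriv.orE (Γ₁ := [])
      (Deriv.orI₁ (Deriv.appNil (hp₀.uid ρ) ((Deriv.ax x (Ty.and ρ Ty.omega)).andE₁)))
      (Deriv.orI₂ (Deriv.appNil ht ((Deriv.ax x (Ty.and σ Ty.omega)).andE₁)))
      ((Deriv.ax x (Ty.or ρ σ)).eqv (SemEq.andOmegaR _)) (envDisj_nil _)
    rwa [subst_var_self] at horE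
  · refine Deriv.arrI ?_
    have horE := Deriv.orE (Γ₁ := [])
      (Deriv.orI₁ (Deriv.appNil (hp₀.uid ρ) ((Deriv.ax x (Ty.and ρ Ty.omega)).andE₁)))
      (Deriv.orI₂ (Deriv.appNil ht' ((Deriv.ax x (Ty.and τ Ty.omega)).andE₁)))
      ((Deriv.ax x (Ty.or ρ τ)).eqv (SemEq.andOmegaR _)) (envDisj_nil _)
    rwa [subst_var_self] at horE

/-! ### SIso for the inner rules -/

lemma pack_oneId (V : Finset ℕ) :
    ∃ f y z : ℕ, f ≠ y ∧
      Pack (Term.lam f (Term.lam y (Term.app (Term.var f) (Term.app (idT z) (Term.var y)))))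
        (Term.lam f (Term.lam y (Term.app (Term.var f) (Term.app (idT z) (Term.var y))))) V := by
  obtain ⟨f, y, hfy, hf, hy⟩ := two_fresh V
  exact ⟨f, y, freshVar (V ∪ {f, y}), hfy, pack_fn1 f y hfy hf hy pack_idT⟩

lemma omegaRule_sIso {σ : Ty} (h : NormLe Ty.omega σ) : SIso σ Ty.omega := by
  intro V
  set x := freshVar V with hx
  set z := freshVar (V ∪ {x}) with hz
  set ys := freshList (omgDepth σ) (V ∪ {x, z}) with hys
  have hxys : x ∉ ys := fun hm => freshList_fresh hm (by simp)
  have hnd : ys.Nodup := freshList_nodup _ _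
  set C := Term.lam x (lamList ys (appList (Term.var x)
    (ys.map (fun y => Term.app (idT z) (Term.var y))))) with hC
  have hFH : FHInf C := by
    rw [hC, map_eq_zarg_replicate]
    exact FHInf.mk' x ys _ (by simp) hxys hnd (fun P hP => by
      rw [List.eq_of_mem_replicate hP]; exact fhinf_id z)
  have hvsub : Term.vset C ⊆ insert x (insert z ys.toFinset) := by
    rw [hC, map_eq_zarg_replicate]
    rw [show Term.vset (Term.lam x (lamList ys (appList (Term.var x)
          (zarg (List.replicate ys.length (idT z)) ys))))
        = insert x (Term.vset (lamList ys (appList (Term.var x)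
          (zarg (List.replicate ys.length (idT z)) ys)))) from rfl,
      vset_lamList, vset_appList]
    have hfold : (zarg (List.replicate ys.length (idT z)) ys).foldr
        (fun a s => Term.vset a ∪ s) ∅ ⊆ insert x (insert z ys.toFinset) := by
      apply foldr_vset_zarg_subset
      · intro P hP
        rw [List.eq_of_mem_replicate hP]
        intro a ha
        simp only [idT, Term.vset, Finset.mem_insert, Finset.mem_singleton] at ha
        rcases ha with rfl | rfl <;> simp
      · intro y hy
        simp [hy]
    intro a ha
    simp only [Finset.mem_insert, Finset.mem_union] at ha
    rcases ha with rfl | ha | ha | ha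
    · simp
    · simp [ha]
    · simp only [Term.vset, Finset.mem_singleton] at ha
      simp [ha]
    · exact hfold ha
  have hpk : Pack C C V := pack_self hFH (by
    rw [Finset.disjoint_left]
    intro a ha hav
    have := hvsub ha
    simp only [Finset.mem_insert, List.mem_toFinset] at this
    rcases this with rfl | rfl | hm
    · exact freshVar_not_mem V hav
    · exact freshVar_not_mem (V ∪ {x}) (Finset.mem_union_left _ hav)
    · exact freshList_fresh hm (by simp [hav]))
  have hdomfresh : ∀ (Θ : Ty), ∀ y ∈ ys, y ∉ Env.dom [(x, Θ)] := by
    intro Θ y hy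
    simp only [Env.dom, List.map_cons, List.map_nil, List.mem_singleton]
    intro hyx
    exact hxys (hyx ▸ hy)
  refine ⟨C, C, hpk, ?_, ?_⟩
  · exact Deriv.arrI (omega_master_rev z ys [(x, σ)] (Term.var x) hnd
      (hdomfresh σ) ((Deriv.ax x σ).toOmega))
  · refine Deriv.arrI (omega_master z ys σ (omg_of_normLe h OmG.omega)
      (by rw [hys, freshList_length]) [(x, Ty.omega)] (Term.var x) hnd
      (hdomfresh Ty.omega) (Deriv.ax x Ty.omega))

lemma eraseAnd_sIso {σ' τ' : Ty} (h : NormLe σ' τ') : SIso (Ty.and σ' τ') σ' := by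
  intro V
  obtain ⟨C₀, N₀, hp₀, ht₀⟩ := coe_of_normLe h (V ∪ {freshVar V})
  obtain ⟨R, hpR⟩ := pack_eta (freshVar V) (freshVar_not_mem V) hp₀
  refine ⟨_, R, hpR, ?_, ?_⟩
  · exact Deriv.arrI (Deriv.appNil (hp₀.uid σ') ((Deriv.ax _ _).andE₁))
  · exact Deriv.arrI (Deriv.andI
      (Deriv.appNil (hp₀.uid σ') (Deriv.ax _ σ'))
      (Deriv.appNil ht₀ (Deriv.ax _ σ')))

lemma eraseOr_sIso {σ' τ' : Ty} (h : NormLe σ' τ') : SIso (Ty.or σ' τ') τ' := by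
  intro V
  obtain ⟨C₀, N₀, hp₀, ht₀⟩ := coe_of_normLe h (V ∪ {freshVar V})
  obtain ⟨R, hpR⟩ := pack_eta (freshVar V) (freshVar_not_mem V) hp₀
  set x := freshVar V
  refine ⟨_, R, hpR, ?_, ?_⟩
  · refine Deriv.arrI ?_
    have b1 : Deriv [(x, Ty.and σ' Ty.omega)] (Term.app C₀ (Term.var x)) τ' :=
      Deriv.appNil ht₀ ((Deriv.ax x _).andE₁)
    have b2 : Deriv [(x, Ty.and τ' Ty.omega)] (Term.app C₀ (Term.var x)) τ' :=
      Deriv.appNil (hp₀.uid τ') ((Deriv.ax x _).andE₁)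
    have horE := Deriv.orE (Γ₁ := []) b1 b2
      ((Deriv.ax x (Ty.or σ' τ')).eqv (SemEq.andOmegaR _)) (envDisj_nil _)
    rwa [subst_var_self] at horE
  · exact Deriv.arrI ((Deriv.appNil (hp₀.uid τ') (Deriv.ax x τ')).orI₂)

lemma innerStep_sIso {σ τ : Ty} (h : InnerStep σ τ) : SIso σ τ := by
  cases h with
  | atomRule a =>
      intro V
      exact ⟨idT (freshVar V), idT (freshVar V), pack_idT,
        Deriv.arrI ((Deriv.ax _ _).eqv (SemEq.symm (SemEq.atomFun a))),
        Deriv.arrI ((Deriv.ax _ _).eqv (SemEq.atomFun a))⟩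
  | omegaRule h hne => exact omegaRule_sIso h
  | distArrAnd σ τ ρ =>
      intro V
      obtain ⟨f, y, z, hfy, hpk⟩ := pack_oneId V
      have hdom : ∀ Θ : Ty, y ∉ Env.dom [(f, Θ)] := fun Θ => by
        simp only [Env.dom, List.map_cons, List.map_nil, List.mem_singleton]
        exact Ne.symm hfy
      have J : ∀ α β : Ty, Deriv [(z, α)] (Term.var z) β →
          Deriv [(y, α)] (Term.app (idT z) (Term.var y)) β := fun α β hd =>
        Deriv.appNil (idT_any hd) (Deriv.ax y α)
      refine ⟨_, _, hpk, ?_, ?_⟩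
      · refine Deriv.arrI (Deriv.andI (Deriv.arrI ?_) (Deriv.arrI ?_))
        · exact (Deriv.snoc (Deriv.ax f (Ty.arr σ (Ty.and τ ρ)))
            (J σ σ (Deriv.ax z σ)) (hdom _)).andE₁
        · exact (Deriv.snoc (Deriv.ax f (Ty.arr σ (Ty.and τ ρ)))
            (J σ σ (Deriv.ax z σ)) (hdom _)).andE₂
      · refine Deriv.arrI (Deriv.arrI (Deriv.andI ?_ ?_))
        · exact Deriv.snoc ((Deriv.ax f (Ty.and (Ty.arr σ τ) (Ty.arr σ ρ))).andE₁)
            (J σ σ (Deriv.ax z σ)) (hdom _)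
        · exact Deriv.snoc ((Deriv.ax f (Ty.and (Ty.arr σ τ) (Ty.arr σ ρ))).andE₂)
            (J σ σ (Deriv.ax z σ)) (hdom _)
  | distAndArr σ τ ρ ζ =>
      intro V
      obtain ⟨f, y, z, hfy, hpk⟩ := pack_oneId V
      have hdom : ∀ Θ : Ty, y ∉ Env.dom [(f, Θ)] := fun Θ => by
        simp only [Env.dom, List.map_cons, List.map_nil, List.mem_singleton]
        exact Ne.symm hfy
      have J : ∀ α β : Ty, Deriv [(z, α)] (Term.var z) β →
          Deriv [(y, α)] (Term.app (idT z) (Term.var y)) β := fun α β hd =>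
        Deriv.appNil (idT_any hd) (Deriv.ax y α)
      refine ⟨_, _, hpk, ?_, ?_⟩
      · -- (((σ∨τ)∧ρ)→ζ) → (((σ∧ρ)∨(τ∧ρ))→ζ)
        refine Deriv.arrI (Deriv.arrI ?_)
        refine Deriv.snoc (Deriv.ax f (Ty.arr (Ty.and (Ty.or σ τ) ρ) ζ)) ?_ (hdom _)
        -- [(y, (σ∧ρ)∨(τ∧ρ))] ⊢ I y : (σ∨τ)∧ρ
        have b1 : Deriv [(y, Ty.and (Ty.and σ ρ) Ty.omega)]
            (Term.app (idT z) (Term.var y)) (Ty.and (Ty.or σ τ) ρ) :=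
          J _ _ (Deriv.andI ((((Deriv.ax z _).andE₁).andE₁).orI₁)
            (((Deriv.ax z _).andE₁).andE₂))
        have b2 : Deriv [(y, Ty.and (Ty.and τ ρ) Ty.omega)]
            (Term.app (idT z) (Term.var y)) (Ty.and (Ty.or σ τ) ρ) :=
          J _ _ (Deriv.andI ((((Deriv.ax z _).andE₁).andE₁).orI₂)
            (((Deriv.ax z _).andE₁).andE₂))
        have horE := Deriv.orE (Γ₁ := []) b1 b2
          ((Deriv.ax y (Ty.or (Ty.and σ ρ) (Ty.and τ ρ))).eqv (SemEq.andOmegaR _))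
          (envDisj_nil _)
        rwa [subst_var_self] at horE
      · refine Deriv.arrI (Deriv.arrI ?_)
        refine Deriv.snoc (Deriv.ax f (Ty.arr (Ty.or (Ty.and σ ρ) (Ty.and τ ρ)) ζ)) ?_ (hdom _)
        -- [(y, (σ∨τ)∧ρ)] ⊢ I y : (σ∧ρ)∨(τ∧ρ)
        have b1 : Deriv [(y, Ty.and σ ρ)]
            (Term.app (idT z) (Term.var y)) (Ty.or (Ty.and σ ρ) (Ty.and τ ρ)) :=
          J _ _ ((Deriv.ax z (Ty.and σ ρ)).orI₁)
        have b2 : Deriv [(y, Ty.and τ ρ)]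
            (Term.app (idT z) (Term.var y)) (Ty.or (Ty.and σ ρ) (Ty.and τ ρ)) :=
          J _ _ ((Deriv.ax z (Ty.and τ ρ)).orI₂)
        have horE := Deriv.orE (Γ₁ := []) b1 b2
          (Deriv.ax y (Ty.and (Ty.or σ τ) ρ)) (envDisj_nil _)
        rwa [subst_var_self] at horE
  | distOrArr σ τ ρ =>
      intro V
      obtain ⟨f, y, z, hfy, hpk⟩ := pack_oneId V
      have hdom : ∀ Θ : Ty, y ∉ Env.dom [(f, Θ)] := fun Θ => by
        simp only [Env.dom, List.map_cons, List.map_nil, List.mem_singleton]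
        exact Ne.symm hfy
      have J : ∀ α β : Ty, Deriv [(z, α)] (Term.var z) β →
          Deriv [(y, α)] (Term.app (idT z) (Term.var y)) β := fun α β hd =>
        Deriv.appNil (idT_any hd) (Deriv.ax y α)
      refine ⟨_, _, hpk, ?_, ?_⟩
      · refine Deriv.arrI (Deriv.andI (Deriv.arrI ?_) (Deriv.arrI ?_))
        · exact Deriv.snoc (Deriv.ax f (Ty.arr (Ty.or σ τ) ρ))
            (J σ (Ty.or σ τ) ((Deriv.ax z σ).orI₁)) (hdom _)
        · exact Deriv.snoc (Deriv.ax f (Ty.arr (Ty.or σ τ) ρ))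
            (J τ (Ty.or σ τ) ((Deriv.ax z τ).orI₂)) (hdom _)
      · refine Deriv.arrI (Deriv.arrI ?_)
        have b1 : Deriv ((y, Ty.and σ Ty.omega) :: [(f, Ty.and (Ty.arr σ ρ) (Ty.arr τ ρ))])
            (Term.app (Term.var f) (Term.app (idT z) (Term.var y))) ρ :=
          Deriv.snoc ((Deriv.ax f _).andE₁)
            (J (Ty.and σ Ty.omega) σ ((Deriv.ax z _).andE₁)) (hdom _)
        have b2 : Deriv ((y, Ty.and τ Ty.omega) :: [(f, Ty.and (Ty.arr σ ρ) (Ty.arr τ ρ))])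
            (Term.app (Term.var f) (Term.app (idT z) (Term.var y))) ρ :=
          Deriv.snoc ((Deriv.ax f _).andE₂)
            (J (Ty.and τ Ty.omega) τ ((Deriv.ax z _).andE₁)) (hdom _)
        have horE := Deriv.orE (Γ₁ := [(f, Ty.and (Ty.arr σ ρ) (Ty.arr τ ρ))]) b1 b2
          ((Deriv.ax y (Ty.or σ τ)).eqv (SemEq.andOmegaR _))
          (envDisj_single _ (hdom _))
        rw [subst_var_self] at horE
        exact horE.perm (List.Perm.swap _ _ _)
  | distArrOr σ τ ρ ζ =>
      intro V
      obtain ⟨f, y, z, hfy, hpk⟩ := pack_oneId V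
      have hdom : ∀ Θ : Ty, y ∉ Env.dom [(f, Θ)] := fun Θ => by
        simp only [Env.dom, List.map_cons, List.map_nil, List.mem_singleton]
        exact Ne.symm hfy
      have J : ∀ α β : Ty, Deriv [(z, α)] (Term.var z) β →
          Deriv [(y, α)] (Term.app (idT z) (Term.var y)) β := fun α β hd =>
        Deriv.appNil (idT_any hd) (Deriv.ax y α)
      refine ⟨_, _, hpk, ?_, ?_⟩
      · refine Deriv.arrI (Deriv.arrI ?_)
        have hN : Deriv ((y, σ) :: [(f, Ty.arr σ (Ty.or (Ty.and τ ρ) ζ))])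
            (Term.app (Term.var f) (Term.app (idT z) (Term.var y)))
            (Ty.or (Ty.and τ ρ) ζ) :=
          Deriv.snoc (Deriv.ax f _) (J σ σ (Deriv.ax z σ)) (hdom _)
        have b1 : Deriv [(z, Ty.and (Ty.and τ ρ) Ty.omega)] (Term.var z)
            (Ty.and (Ty.or τ ζ) (Ty.or ρ ζ)) :=
          Deriv.andI ((((Deriv.ax z _).andE₁).andE₁).orI₁)
            ((((Deriv.ax z _).andE₁).andE₂).orI₁)
        have b2 : Deriv [(z, Ty.and ζ Ty.omega)] (Term.var z)
            (Ty.and (Ty.or τ ζ) (Ty.or ρ ζ)) :=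
          Deriv.andI (((Deriv.ax z _).andE₁).orI₂) (((Deriv.ax z _).andE₁).orI₂)
        have horE := Deriv.orE (Γ₁ := []) b1 b2 (hN.eqv (SemEq.andOmegaR _)) (envDisj_nil _)
        rwa [subst_var_eq] at horE
      · refine Deriv.arrI (Deriv.arrI ?_)
        have hN : Deriv ((y, σ) :: [(f, Ty.arr σ (Ty.and (Ty.or τ ζ) (Ty.or ρ ζ)))])
            (Term.app (Term.var f) (Term.app (idT z) (Term.var y)))
            (Ty.and (Ty.or τ ζ) (Ty.or ρ ζ)) :=
          Deriv.snoc (Deriv.ax f _) (J σ σ (Deriv.ax z σ)) (hdom _)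
        have b1 : Deriv [(z, Ty.and τ (Ty.or ρ ζ))] (Term.var z)
            (Ty.or (Ty.and τ ρ) ζ) := by
          have bb1 : Deriv [(z, Ty.and ρ τ)] (Term.var z) (Ty.or (Ty.and τ ρ) ζ) :=
            (Deriv.andI ((Deriv.ax z _).andE₂) ((Deriv.ax z _).andE₁)).orI₁
          have bb2 : Deriv [(z, Ty.and ζ τ)] (Term.var z) (Ty.or (Ty.and τ ρ) ζ) :=
            ((Deriv.ax z _).andE₁).orI₂
          have hinner := Deriv.orE (Γ₁ := []) bb1 bb2
            (Deriv.andI ((Deriv.ax z (Ty.and τ (Ty.or ρ ζ))).andE₂)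
              ((Deriv.ax z (Ty.and τ (Ty.or ρ ζ))).andE₁)) (envDisj_nil _)
          rwa [subst_var_eq] at hinner
        have b2 : Deriv [(z, Ty.and ζ (Ty.or ρ ζ))] (Term.var z)
            (Ty.or (Ty.and τ ρ) ζ) := ((Deriv.ax z _).andE₁).orI₂
        have horE := Deriv.orE (Γ₁ := []) b1 b2 hN (envDisj_nil _)
        rwa [subst_var_eq] at horE
  | eraseAnd h => exact eraseAnd_sIso h
  | eraseOr h => exact eraseOr_sIso h

/-! ### the top-level distribution rule and contextual closure -/

lemma dist_sIso (σ τ ρ : Ty) :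
    SIso (Ty.or (Ty.and σ τ) ρ) (Ty.and (Ty.or σ ρ) (Ty.or τ ρ)) := by
  intro V
  set x := freshVar V with hx
  refine ⟨idT x, idT x, pack_idT, Deriv.arrI ?_, Deriv.arrI ?_⟩
  · -- (σ∧τ)∨ρ ⊢ (σ∨ρ)∧(τ∨ρ)
    have b1 : Deriv [(x, Ty.and (Ty.and σ τ) Ty.omega)] (Term.var x)
        (Ty.and (Ty.or σ ρ) (Ty.or τ ρ)) :=
      Deriv.andI ((((Deriv.ax x _).andE₁).andE₁).orI₁) ((((Deriv.ax x _).andE₁).andE₂).orI₁)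
    have b2 : Deriv [(x, Ty.and ρ Ty.omega)] (Term.var x)
        (Ty.and (Ty.or σ ρ) (Ty.or τ ρ)) :=
      Deriv.andI (((Deriv.ax x _).andE₁).orI₂) (((Deriv.ax x _).andE₁).orI₂)
    have horE := Deriv.orE (Γ₁ := []) b1 b2
      ((Deriv.ax x (Ty.or (Ty.and σ τ) ρ)).eqv (SemEq.andOmegaR _)) (envDisj_nil _)
    rwa [subst_var_self] at horE
  · -- (σ∨ρ)∧(τ∨ρ) ⊢ (σ∧τ)∨ρ
    have b1 : Deriv [(x, Ty.and σ (Ty.or τ ρ))] (Term.var x) (Ty.or (Ty.and σ τ) ρ) := by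
      have bb1 : Deriv [(x, Ty.and τ σ)] (Term.var x) (Ty.or (Ty.and σ τ) ρ) :=
        (Deriv.andI ((Deriv.ax x _).andE₂) ((Deriv.ax x _).andE₁)).orI₁
      have bb2 : Deriv [(x, Ty.and ρ σ)] (Term.var x) (Ty.or (Ty.and σ τ) ρ) :=
        ((Deriv.ax x _).andE₁).orI₂
      have hinner := Deriv.orE (Γ₁ := []) bb1 bb2
        (Deriv.andI ((Deriv.ax x (Ty.and σ (Ty.or τ ρ))).andE₂)
          ((Deriv.ax x (Ty.and σ (Ty.or τ ρ))).andE₁)) (envDisj_nil _)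
      rwa [subst_var_self] at hinner
    have b2 : Deriv [(x, Ty.and ρ (Ty.or τ ρ))] (Term.var x) (Ty.or (Ty.and σ τ) ρ) :=
      ((Deriv.ax x _).andE₁).orI₂
    have horE := Deriv.orE (Γ₁ := []) b1 b2
      (Deriv.ax x (Ty.and (Ty.or σ ρ) (Ty.or τ ρ))) (envDisj_nil _)
    rwa [subst_var_self] at horE

lemma ctx_sIso : ∀ (C : TyCtx) {σ τ : Ty}, SIso σ τ → SIso (C.fill σ) (C.fill τ)
  | TyCtx.hole, _, _, h => h
  | TyCtx.arrL C ρ, _, _, h => sIso_arrL ρ (ctx_sIso C h)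
  | TyCtx.arrR ρ C, _, _, h => sIso_arrR ρ (ctx_sIso C h)
  | TyCtx.andL C ρ, _, _, h => sIso_andL ρ (ctx_sIso C h)
  | TyCtx.andR ρ C, _, _, h => sIso_andR ρ (ctx_sIso C h)
  | TyCtx.orL C ρ, _, _, h => sIso_orL ρ (ctx_sIso C h)
  | TyCtx.orR ρ C, _, _, h => sIso_orR ρ (ctx_sIso C h)

lemma topStep_sIso {σ τ : Ty} (h : TopStep σ τ) : SIso σ τ := by
  induction h with
  | ctx C hin => exact ctx_sIso C (innerStep_sIso hin)
  | dist σ τ ρ => exact dist_sIso σ τ ρ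
  | arrR σ h ih => exact sIso_arrR σ ih

lemma rtg_sIso {σ τ : Ty} (h : Relation.ReflTransGen TopStep σ τ) : SIso σ τ := by
  induction h with
  | refl => exact sIso_refl σ
  | tail _ h₂ ih => exact ih.trans (topStep_sIso h₂)

/-- Every type is strongly isomorphic to its normal form. -/
theorem strongIso_nf :
    ∀ σ : Ty, StrongIso σ (nf σ) := by
  intro σ
  by_cases h : ∃ ν, Relation.ReflTransGen TopStep σ ν ∧ ∀ ρ, ¬ TopStep ν ρ
  · rw [nf, dif_pos h]
    exact (rtg_sIso h.choose_spec.1).strongIso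
  · rw [nf, dif_neg h]
    exact (sIso_refl σ).strongIso

end TypeIso
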